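/- arXiv:1601.05061 — 7 statements merged into one kernel-verified Lean document; each statement's English description precedes it below -/
import Mathlib

section
/- Let x : ℝ → ℝ be a bounded, locally integrable function whose ergodic average ⟨x⟩ = lim_{T→∞} (1/T)∫₀ᵀ x(t) dt exists, and let w : [0,1] → ℝ be continuous with mean w̄ = ∫₀¹ w(s) ds. Then the infinitely-long windowed time average lim_{T→∞} (1/T)∫₀ᵀ w(t/T) x(t) dt exists and equals w̄ · ⟨x⟩. -/
open MeasureTheory Filter Set

private lemma tendsto_of_approx (f : ℝ → ℝ) (c : ℝ)
    (h : ∀ ε : ℝ, 0 < ε → ∃ g : ℝ → ℝ, ∃ d : ℝ, Tendsto g atTop (nhds d) ∧ |d - c| ≤ ε ∧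
      ∀ᶠ T in (atTop : Filter ℝ), |f T - g T| ≤ ε) :
    Tendsto f atTop (nhds c) := by
  rw [Metric.tendsto_atTop]
  intro ε hε
  obtain ⟨g, d, hg, hdc, hfg⟩ := h (ε / 4) (by linarith)
  rw [Metric.tendsto_atTop] at hg
  obtain ⟨N₁, hN₁⟩ := hg (ε / 4) (by linarith)
  obtain ⟨N₂, hN₂⟩ := eventually_atTop.mp hfg
  refine ⟨max N₁ N₂, fun T hT => ?_⟩
  have h1 := hN₁ T (le_trans (le_max_left _ _) hT)
  have h2 := hN₂ T (le_trans (le_max_right _ _) hT)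
  rw [Real.dist_eq] at h1 ⊢
  have key : |f T - c| ≤ |f T - g T| + |g T - d| + |d - c| := by
    have heq : f T - c = (f T - g T) + (g T - d) + (d - c) := by ring
    rw [heq]
    exact (abs_add_le _ _).trans (add_le_add_left (abs_add_le _ _) _)
  linarith

private lemma avg_scaled (x : ℝ → ℝ) (L : ℝ)
    (hx : Tendsto (fun T : ℝ => (1 / T) * ∫ t in (0:ℝ)..T, x t) atTop (nhds L))
    {a : ℝ} (ha : 0 ≤ a) :
    Tendsto (fun T : ℝ => (1 / T) * ∫ t in (0:ℝ)..(a * T), x t) atTop (nhds (a * L)) := by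
  rcases ha.eq_or_lt with h | h
  · simp only [← h, zero_mul, intervalIntegral.integral_same, mul_zero]
    exact tendsto_const_nhds
  · have h1 : Tendsto (fun T : ℝ => a * T) atTop atTop :=
      Tendsto.const_mul_atTop h tendsto_id
    have h2 := (hx.comp h1).const_mul a
    refine h2.congr' ?_
    filter_upwards [eventually_gt_atTop 0] with T hT
    simp only [Function.comp]
    rw [← mul_assoc]
    congr 1
    field_simp

private lemma piece_tendsto (x : ℝ → ℝ) (L : ℝ)
    (hint : ∀ u v : ℝ, IntervalIntegrable x MeasureTheory.volume u v)
    (hx : Tendsto (fun T : ℝ => (1 / T) * ∫ t in (0:ℝ)..T, x t) atTop (nhds L))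
    {a b : ℝ} (ha : 0 ≤ a) (hb : 0 ≤ b) :
    Tendsto (fun T : ℝ => (1 / T) * ∫ t in (a * T)..(b * T), x t) atTop
      (nhds ((b - a) * L)) := by
  have h1 := (avg_scaled x L hx hb).sub (avg_scaled x L hx ha)
  have h2 : ∀ T : ℝ,
      ((1/T) * ∫ t in (0:ℝ)..(b*T), x t) - ((1/T) * ∫ t in (0:ℝ)..(a*T), x t)
        = (1/T) * ∫ t in (a*T)..(b*T), x t := by
    intro T
    rw [← mul_sub, intervalIntegral.integral_interval_sub_left (hint _ _) (hint _ _)]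
  have h3 : b * L - a * L = (b - a) * L := by ring
  rw [← h3]
  exact h1.congr h2

/-- Lemma 2 (windowing lemma): if `x` is bounded, locally integrable, and its ergodic
average `⟨x⟩ = lim_{T→∞} (1/T)∫₀ᵀ x` exists (and equals `L`), and `w` is continuous on
`[0,1]` with mean `w̄ = ∫₀¹ w`, then the infinitely-long windowed time average
`lim_{T→∞} (1/T)∫₀ᵀ w(t/T) x(t) dt` exists and equals `w̄ · ⟨x⟩`. -/
theorem windowed_average_eq_mean_mul_average
    (x w : ℝ → ℝ) (L : ℝ)
    (hxb : ∃ B : ℝ, ∀ t : ℝ, |x t| ≤ B)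
    (hxloc : LocallyIntegrable x)
    (hx : Tendsto (fun T : ℝ => (1 / T) * ∫ t in (0:ℝ)..T, x t) atTop (nhds L))
    (hw : ContinuousOn w (Icc (0:ℝ) 1)) :
    Tendsto (fun T : ℝ => (1 / T) * ∫ t in (0:ℝ)..T, w (t / T) * x t) atTop
      (nhds ((∫ s in (0:ℝ)..1, w s) * L)) := by
  obtain ⟨B, hB⟩ := hxb
  have hB0 : 0 ≤ B := (abs_nonneg _).trans (hB 0)
  have hint : ∀ u v : ℝ, IntervalIntegrable x volume u v := fun u v =>
    (hxloc.integrableOn_isCompact isCompact_uIcc).intervalIntegrable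
  apply tendsto_of_approx
  intro ε hε
  have hM0 : (0:ℝ) < B + |L| + 1 := by positivity
  set ε' : ℝ := ε / (B + |L| + 1) with hε'def
  have hε'0 : 0 < ε' := div_pos hε hM0
  have hεle : ε' * (B + |L| + 1) = ε := div_mul_cancel₀ ε hM0.ne'
  have hBε : ε' * B ≤ ε := by nlinarith [abs_nonneg L, hε'0.le]
  have hLε : ε' * |L| ≤ ε := by nlinarith [abs_nonneg L, hε'0.le]
  obtain ⟨δ, hδ0, hδ⟩ := Metric.uniformContinuousOn_iff_le.mp
    (isCompact_Icc.uniformContinuousOn_of_continuous hw) ε' hε'0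
  obtain ⟨m, hm⟩ := exists_nat_one_div_lt hδ0
  set N : ℕ := m + 1 with hNdef
  have hN0 : (0:ℝ) < (N:ℝ) := by
    have : 0 < N := Nat.succ_pos m
    exact_mod_cast this
  have hNδ : (1:ℝ)/(N:ℝ) ≤ δ := by
    have hcast : ((N:ℝ)) = (m:ℝ) + 1 := by rw [hNdef]; push_cast; ring
    rw [hcast]; exact hm.le
  have hwclose : ∀ u ∈ Icc (0:ℝ) 1, ∀ v ∈ Icc (0:ℝ) 1,
      |u - v| ≤ 1/(N:ℝ) → |w u - w v| ≤ ε' := by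
    intro u hu v hv huv
    have := hδ u hu v hv (by rw [Real.dist_eq]; exact huv.trans hNδ)
    rwa [Real.dist_eq] at this
  -- membership facts
  have hmem : ∀ k : ℕ, k < N → ∀ s : ℝ, (k:ℝ)/N < s → s ≤ ((k:ℝ)+1)/N →
      s ∈ Icc (0:ℝ) 1 ∧ (k:ℝ)/N ∈ Icc (0:ℝ) 1 ∧ |s - (k:ℝ)/N| ≤ 1/(N:ℝ) := by
    intro k hk s hs1 hs2
    have hkN : (k:ℝ) ≤ (N:ℝ) := by exact_mod_cast hk.le
    have hkN1 : (k:ℝ) + 1 ≤ (N:ℝ) := by exact_mod_cast hk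
    have h0 : (0:ℝ) ≤ (k:ℝ)/N := by positivity
    have h1 : ((k:ℝ)+1)/N ≤ 1 := by rw [div_le_one hN0]; exact hkN1
    have hdiff : ((k:ℝ)+1)/N - (k:ℝ)/N = 1/(N:ℝ) := by ring
    refine ⟨⟨le_trans h0 hs1.le, hs2.trans h1⟩, ⟨h0, (div_le_one hN0).mpr hkN⟩, ?_⟩
    rw [abs_of_nonneg (by linarith)]
    linarith
  refine ⟨fun T => ∑ k ∈ Finset.range N, w ((k:ℝ)/N) *
      ((1/T) * ∫ t in ((k:ℝ)/N * T)..((((k:ℝ)+1)/N) * T), x t),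
    ∑ k ∈ Finset.range N, w ((k:ℝ)/N) * ((((k:ℝ)+1)/N - (k:ℝ)/N) * L), ?_, ?_, ?_⟩
  · -- tendsto of g to d
    refine tendsto_finset_sum _ fun k hk => ?_
    exact (piece_tendsto x L hint hx (by positivity) (by positivity)).const_mul _
  · -- |d - c| ≤ ε
    have hwint : ∀ k, k < N → IntervalIntegrable w volume ((k:ℝ)/N) (((k:ℝ)+1)/N) := by
      intro k hk
      have hkN : (k:ℝ) ≤ (N:ℝ) := by exact_mod_cast hk.le
      have hkN1 : (k:ℝ) + 1 ≤ (N:ℝ) := by exact_mod_cast hk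
      have h1 : ((k:ℝ)+1)/N ≤ 1 := by rw [div_le_one hN0]; exact hkN1
      apply ContinuousOn.intervalIntegrable
      apply hw.mono
      rw [uIcc_of_le (by gcongr <;> linarith)]
      intro s hs
      exact ⟨le_trans (by positivity) hs.1, hs.2.trans h1⟩
    have hwint' : ∀ k, k < N →
        IntervalIntegrable w volume ((fun j : ℕ => (j:ℝ)/N) k) ((fun j : ℕ => (j:ℝ)/N) (k+1)) := by
      intro k hk
      have := hwint k hk
      simp only [Nat.cast_add, Nat.cast_one]
      exact this
    have hsplit := intervalIntegral.sum_integral_adjacent_intervals (μ := volume) (f := w) hwint'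
    simp only [Nat.cast_zero, zero_div, Nat.cast_add, Nat.cast_one, div_self hN0.ne'] at hsplit
    -- hsplit : ∑ k ∈ range N, ∫ s in (k:ℝ)/N..((k:ℝ)+1)/N, w s = ∫ s in 0..1, w s
    rw [← hsplit, Finset.sum_mul, ← Finset.sum_sub_distrib]
    have hterm : ∀ k ∈ Finset.range N,
        |w ((k:ℝ)/N) * ((((k:ℝ)+1)/N - (k:ℝ)/N) * L)
          - (∫ s in ((k:ℝ)/N)..(((k:ℝ)+1)/N), w s) * L| ≤ ε' * |L| / N := by
      intro k hk
      rw [Finset.mem_range] at hk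
      have heq : w ((k:ℝ)/N) * ((((k:ℝ)+1)/N - (k:ℝ)/N) * L)
          - (∫ s in ((k:ℝ)/N)..(((k:ℝ)+1)/N), w s) * L
          = (∫ s in ((k:ℝ)/N)..(((k:ℝ)+1)/N), (w ((k:ℝ)/N) - w s)) * L := by
        rw [intervalIntegral.integral_sub intervalIntegrable_const (hwint k hk),
          intervalIntegral.integral_const, smul_eq_mul]
        ring
      rw [heq, abs_mul]
      have hkN1 : (k:ℝ) + 1 ≤ (N:ℝ) := by exact_mod_cast hk
      have hnorm : |∫ s in ((k:ℝ)/N)..(((k:ℝ)+1)/N), (w ((k:ℝ)/N) - w s)|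
          ≤ ε' * |(((k:ℝ)+1)/N) - (k:ℝ)/N| := by
        have hb : ∀ s ∈ Set.uIoc ((k:ℝ)/N) (((k:ℝ)+1)/N), ‖w ((k:ℝ)/N) - w s‖ ≤ ε' := by
          intro s hs
          rw [uIoc_of_le (by gcongr <;> linarith)] at hs
          obtain ⟨hsm, hkm, hsd⟩ := hmem k hk s hs.1 hs.2
          rw [Real.norm_eq_abs, abs_sub_comm]
          exact hwclose s hsm _ hkm hsd
        simpa [Real.norm_eq_abs] using
          intervalIntegral.norm_integral_le_of_norm_le_const hb
      have habs : |(((k:ℝ)+1)/N) - (k:ℝ)/N| = 1/(N:ℝ) := by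
        rw [show (((k:ℝ)+1)/N) - (k:ℝ)/N = 1/(N:ℝ) by ring, abs_of_pos (by positivity)]
      rw [habs] at hnorm
      calc |∫ s in ((k:ℝ)/N)..(((k:ℝ)+1)/N), (w ((k:ℝ)/N) - w s)| * |L|
          ≤ (ε' * (1/(N:ℝ))) * |L| := by gcongr
        _ = ε' * |L| / N := by ring
    calc |∑ k ∈ Finset.range N,
          (w ((k:ℝ)/N) * ((((k:ℝ)+1)/N - (k:ℝ)/N) * L)
            - (∫ s in ((k:ℝ)/N)..(((k:ℝ)+1)/N), w s) * L)|
        ≤ ∑ k ∈ Finset.range N, |w ((k:ℝ)/N) * ((((k:ℝ)+1)/N - (k:ℝ)/N) * L)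
            - (∫ s in ((k:ℝ)/N)..(((k:ℝ)+1)/N), w s) * L| :=
          Finset.abs_sum_le_sum_abs _ _
      _ ≤ ∑ _k ∈ Finset.range N, ε' * |L| / N := Finset.sum_le_sum hterm
      _ = ε' * |L| := by
          rw [Finset.sum_const, Finset.card_range, nsmul_eq_mul]
          field_simp
      _ ≤ ε := hLε
  · -- eventual closeness of f and g
    filter_upwards [eventually_gt_atTop 0] with T hT
    have hintW : ∀ k, k < N → IntervalIntegrable (fun t => w (t/T) * x t) volume
        ((k:ℝ)/N * T) ((((k:ℝ)+1)/N) * T) := by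
      intro k hk
      have hkN1 : (k:ℝ) + 1 ≤ (N:ℝ) := by exact_mod_cast hk
      have hab : (k:ℝ)/N * T ≤ (((k:ℝ)+1)/N) * T := by
        apply mul_le_mul_of_nonneg_right _ hT.le
        gcongr <;> linarith
      refine (hint _ _).continuousOn_mul ?_
      apply (hw.comp ((continuous_id.div_const T).continuousOn))
      rw [uIcc_of_le hab]
      intro t ht
      constructor
      · have : (0:ℝ) ≤ (k:ℝ)/N * T := by positivity
        have h0t : 0 ≤ t := le_trans this ht.1
        positivity
      · rw [div_le_one hT]
        calc t ≤ (((k:ℝ)+1)/N) * T := ht.2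
          _ ≤ 1 * T := by
              apply mul_le_mul_of_nonneg_right _ hT.le
              rw [div_le_one hN0]; exact hkN1
          _ = T := one_mul T
    have hintW' : ∀ k, k < N → IntervalIntegrable (fun t => w (t/T) * x t) volume
        ((fun j : ℕ => (j:ℝ)/N * T) k) ((fun j : ℕ => (j:ℝ)/N * T) (k+1)) := by
      intro k hk
      have := hintW k hk
      simp only [Nat.cast_add, Nat.cast_one]
      exact this
    have hsplitT := intervalIntegral.sum_integral_adjacent_intervals (μ := volume)
      (f := fun t => w (t/T) * x t) hintW'
    simp only [Nat.cast_zero, zero_div, zero_mul, Nat.cast_add, Nat.cast_one,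
      div_self hN0.ne', one_mul] at hsplitT
    rw [← hsplitT, Finset.mul_sum, ← Finset.sum_sub_distrib]
    have hterm : ∀ k ∈ Finset.range N,
        |(1/T) * (∫ t in ((k:ℝ)/N * T)..((((k:ℝ)+1)/N) * T), w (t/T) * x t)
          - w ((k:ℝ)/N) * ((1/T) * ∫ t in ((k:ℝ)/N * T)..((((k:ℝ)+1)/N) * T), x t)|
          ≤ ε' * B / N := by
      intro k hk
      rw [Finset.mem_range] at hk
      have hkN1 : (k:ℝ) + 1 ≤ (N:ℝ) := by exact_mod_cast hk
      have hab : (k:ℝ)/N * T ≤ (((k:ℝ)+1)/N) * T := by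
        apply mul_le_mul_of_nonneg_right _ hT.le
        gcongr <;> linarith
      have heq : (1/T) * (∫ t in ((k:ℝ)/N * T)..((((k:ℝ)+1)/N) * T), w (t/T) * x t)
          - w ((k:ℝ)/N) * ((1/T) * ∫ t in ((k:ℝ)/N * T)..((((k:ℝ)+1)/N) * T), x t)
          = (1/T) * ∫ t in ((k:ℝ)/N * T)..((((k:ℝ)+1)/N) * T),
              (w (t/T) - w ((k:ℝ)/N)) * x t := by
        have hsub : ∫ t in ((k:ℝ)/N * T)..((((k:ℝ)+1)/N) * T), (w (t/T) - w ((k:ℝ)/N)) * x t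
            = (∫ t in ((k:ℝ)/N * T)..((((k:ℝ)+1)/N) * T), w (t/T) * x t)
              - w ((k:ℝ)/N) * ∫ t in ((k:ℝ)/N * T)..((((k:ℝ)+1)/N) * T), x t := by
          simp_rw [sub_mul]
          rw [intervalIntegral.integral_sub (hintW k hk) ((hint _ _).const_mul _),
            intervalIntegral.integral_const_mul]
        rw [hsub]; ring
      rw [heq]
      have hnorm : |∫ t in ((k:ℝ)/N * T)..((((k:ℝ)+1)/N) * T), (w (t/T) - w ((k:ℝ)/N)) * x t|
          ≤ (ε' * B) * |(((k:ℝ)+1)/N) * T - (k:ℝ)/N * T| := by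
        have hb : ∀ t ∈ Set.uIoc ((k:ℝ)/N * T) ((((k:ℝ)+1)/N) * T),
            ‖(w (t/T) - w ((k:ℝ)/N)) * x t‖ ≤ ε' * B := by
          intro t ht
          rw [uIoc_of_le hab] at ht
          have hs1 : (k:ℝ)/N < t/T := by
            rw [lt_div_iff₀ hT]; exact ht.1
          have hs2 : t/T ≤ ((k:ℝ)+1)/N := by
            rw [div_le_iff₀ hT]; exact ht.2
          obtain ⟨hsm, hkm, hsd⟩ := hmem k hk (t/T) hs1 hs2
          rw [Real.norm_eq_abs, abs_mul]
          have h1 : |w (t/T) - w ((k:ℝ)/N)| ≤ ε' := hwclose _ hsm _ hkm hsd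
          exact mul_le_mul h1 (hB t) (abs_nonneg _) hε'0.le
        simpa [Real.norm_eq_abs] using
          intervalIntegral.norm_integral_le_of_norm_le_const hb
      have habs : |(((k:ℝ)+1)/N) * T - (k:ℝ)/N * T| = T / N := by
        rw [show (((k:ℝ)+1)/N) * T - (k:ℝ)/N * T = T/(N:ℝ) by ring,
          abs_of_pos (by positivity)]
      rw [habs] at hnorm
      rw [abs_mul, abs_of_pos (by positivity : (0:ℝ) < 1/T)]
      calc (1/T) * |∫ t in ((k:ℝ)/N * T)..((((k:ℝ)+1)/N) * T), (w (t/T) - w ((k:ℝ)/N)) * x t|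
          ≤ (1/T) * ((ε' * B) * (T/N)) := by gcongr
        _ = ε' * B / N := by field_simp
    calc |∑ k ∈ Finset.range N,
          ((1/T) * (∫ t in ((k:ℝ)/N * T)..((((k:ℝ)+1)/N) * T), w (t/T) * x t)
            - w ((k:ℝ)/N) * ((1/T) * ∫ t in ((k:ℝ)/N * T)..((((k:ℝ)+1)/N) * T), x t))|
        ≤ ∑ k ∈ Finset.range N,
          |(1/T) * (∫ t in ((k:ℝ)/N * T)..((((k:ℝ)+1)/N) * T), w (t/T) * x t)
            - w ((k:ℝ)/N) * ((1/T) * ∫ t in ((k:ℝ)/N * T)..((((k:ℝ)+1)/N) * T), x t)| :=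
          Finset.abs_sum_le_sum_abs _ _
      _ ≤ ∑ _k ∈ Finset.range N, ε' * B / N := Finset.sum_le_sum hterm
      _ = ε' * B := by
          rw [Finset.sum_const, Finset.card_range, nsmul_eq_mul]
          field_simp
      _ ≤ ε := hBε
end

section
/- Let η : ℝ → ℝ be bounded and locally integrable, and suppose its ergodic average ⟨η⟩ = lim_{T→∞} (1/T)∫₀ᵀ η(τ) dτ exists. Then lim_{T→∞} sup_{τ̌, t ∈ [0,T]} | (1/T)∫_{τ̌}^{t} η(τ) dτ − ⟨η⟩·(t − τ̌)/T | = 0; that is, the supremum over all pairs τ̌, t in [0,T] of the deviation of the scaled partial integral (1/T)∫_{τ̌}^{t} η from the linear approximation ⟨η⟩(t − τ̌)/T tends to zero as T → ∞. -/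
open MeasureTheory Filter Set

/-- Lemma 3: if `η` is bounded, locally integrable, and its ergodic average
`⟨η⟩ = lim_{T→∞} (1/T)∫₀ᵀ η` exists (and equals `L`), then
`sup_{tau,t ∈ [0,T]} |(1/T)∫_{tau}^t η(τ) dτ − ⟨η⟩·(t−tau)/T| → 0` as `T → ∞`. -/
theorem sup_scaled_partial_integral_sub_linear_tendsto_zero
    (η : ℝ → ℝ) (L : ℝ)
    (hηb : ∃ B : ℝ, ∀ t : ℝ, |η t| ≤ B)
    (hηloc : LocallyIntegrable η)
    (hη : Tendsto (fun T : ℝ => (1 / T) * ∫ τ in (0:ℝ)..T, η τ) atTop (nhds L)) :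
    Tendsto (fun T : ℝ =>
        ⨆ tau ∈ Icc (0:ℝ) T, ⨆ t ∈ Icc (0:ℝ) T,
          |(1 / T) * (∫ τ in tau..t, η τ) - L * ((t - tau) / T)|)
      atTop (nhds 0) := by
  obtain ⟨B, hB⟩ := hηb
  have hB0 : 0 ≤ B := le_trans (abs_nonneg _) (hB 0)
  have hint : ∀ a b : ℝ, IntervalIntegrable η volume a b := fun a b =>
    (hηloc.integrableOn_isCompact isCompact_uIcc).intervalIntegrable
  set I : ℝ → ℝ := fun u => ∫ τ in (0:ℝ)..u, η τ with hI
  have hIbound : ∀ u : ℝ, 0 ≤ u → |I u| ≤ B * u := by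
    intro u hu
    have h := intervalIntegral.norm_integral_le_of_norm_le_const (C := B)
      (f := η) (a := 0) (b := u) (fun x _ => hB x)
    simpa [hI, abs_of_nonneg hu] using h
  rw [Metric.tendsto_atTop]
  intro ε hε
  have h8 : (0:ℝ) < ε / 8 := by linarith
  obtain ⟨T₀', hT₀'⟩ := (Metric.tendsto_atTop.mp hη) (ε / 8) h8
  set T₀ := max T₀' 1 with hT₀def
  have hT₀1 : (1:ℝ) ≤ T₀ := le_max_right _ _
  have hF : ∀ t : ℝ, T₀ ≤ t → |I t - L * t| ≤ (ε / 8) * t := by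
    intro t ht
    have ht0 : (0:ℝ) < t := lt_of_lt_of_le one_pos (le_trans hT₀1 ht)
    have h1 := hT₀' t (le_trans (le_max_left _ _) ht)
    rw [Real.dist_eq] at h1
    have h2 : |1 / t * I t - L| ≤ ε / 8 := le_of_lt h1
    have h3 : I t - L * t = t * (1 / t * I t - L) := by field_simp
    rw [h3, abs_mul, abs_of_pos ht0]
    nlinarith [abs_nonneg (1 / t * I t - L)]
  set C := (B + |L|) * T₀ with hC
  have hC0 : 0 ≤ C := mul_nonneg (by positivity) (by linarith)
  have hFb : ∀ T u : ℝ, T₀ ≤ T → u ∈ Icc (0:ℝ) T → |I u - L * u| ≤ C + ε / 8 * T := by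
    intro T u hT hu
    obtain ⟨hu0, huT⟩ := hu
    have hT0 : (0:ℝ) < T := lt_of_lt_of_le one_pos (le_trans hT₀1 hT)
    rcases le_or_gt u T₀ with h | h
    · have h1 : |I u - L * u| ≤ |I u| + |L * u| := abs_sub _ _
      have h2 : |L * u| = |L| * u := by rw [abs_mul, abs_of_nonneg hu0]
      have h3 : |I u| ≤ B * u := hIbound u hu0
      have : |I u - L * u| ≤ (B + |L|) * T₀ := by
        rw [h2] at h1
        nlinarith
      nlinarith
    · have h1 := hF u h.le
      have : ε / 8 * u ≤ ε / 8 * T := by nlinarith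
      nlinarith
  set N := max T₀ (8 * C / ε) with hN
  refine ⟨N, fun T hT => ?_⟩
  have hTT₀ : T₀ ≤ T := le_trans (le_max_left _ _) hT
  have hT0 : (0:ℝ) < T := lt_of_lt_of_le one_pos (le_trans hT₀1 hTT₀)
  have hCT : 2 * C / T ≤ ε / 4 := by
    have h1 : 8 * C / ε ≤ T := le_trans (le_max_right _ _) hT
    rw [div_le_iff₀ hε] at h1
    rw [div_le_iff₀ hT0]
    nlinarith
  have key : ∀ tau t : ℝ, tau ∈ Icc (0:ℝ) T → t ∈ Icc (0:ℝ) T →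
      |1 / T * (∫ τ in tau..t, η τ) - L * ((t - tau) / T)| ≤ ε / 2 := by
    intro tau t htau ht
    have hsplit : (∫ τ in tau..t, η τ) = I t - I tau :=
      (intervalIntegral.integral_interval_sub_left (hint 0 t) (hint 0 tau)).symm
    have heq : 1 / T * (∫ τ in tau..t, η τ) - L * ((t - tau) / T)
        = ((I t - L * t) - (I tau - L * tau)) / T := by
      rw [hsplit]; field_simp; ring
    rw [heq]
    have h1 : |(I t - L * t) - (I tau - L * tau)| ≤ |I t - L * t| + |I tau - L * tau| :=
      abs_sub _ _
    have h2 := hFb T t hTT₀ ht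
    have h3 := hFb T tau hTT₀ htau
    rw [abs_div, abs_of_pos hT0]
    rw [div_le_iff₀ hT0]
    have h4 : 2 * C ≤ ε / 4 * T := by
      rw [div_le_iff₀ hT0] at hCT
      linarith
    nlinarith
  have hsup_le : (⨆ tau ∈ Icc (0:ℝ) T, ⨆ t ∈ Icc (0:ℝ) T,
      |(1 / T) * (∫ τ in tau..t, η τ) - L * ((t - tau) / T)|) ≤ ε / 2 := by
    apply Real.iSup_le _ (by linarith)
    intro tau
    apply Real.iSup_le _ (by linarith)
    intro htau
    apply Real.iSup_le _ (by linarith)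
    intro t
    apply Real.iSup_le _ (by linarith)
    intro ht
    exact key tau t htau ht
  have hsup_nonneg : (0:ℝ) ≤ ⨆ tau ∈ Icc (0:ℝ) T, ⨆ t ∈ Icc (0:ℝ) T,
      |(1 / T) * (∫ τ in tau..t, η τ) - L * ((t - tau) / T)| :=
    Real.iSup_nonneg fun tau => Real.iSup_nonneg fun _ => Real.iSup_nonneg fun t =>
      Real.iSup_nonneg fun _ => abs_nonneg _
  rw [Real.dist_eq, sub_zero, abs_of_nonneg hsup_nonneg]
  linarith
end

section
/- Let J : ℝ → ℝ be bounded and locally integrable, with ergodic average ⟨J⟩ = lim_{T→∞} (1/T)∫₀ᵀ J(t) dt existing. Let w : [0,1] → ℝ be continuously differentiable with w(0) = w(1) = 0, and write w̄ = ∫₀¹ w(s) ds. Let τ̌ : (0,∞) → ℝ be such that š = lim_{T→∞} τ̌(T)/T exists. Then lim_{T→∞} (1/T)∫₀ᵀ w'(t/T) · ((t − τ̌(T))/T) · J(t) dt = −w̄ · ⟨J⟩. -/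
open MeasureTheory Filter Set



lemma wda_intble (J : ℝ → ℝ) (hJloc : LocallyIntegrable J) {T : ℝ} (hT : 0 < T) :
    IntervalIntegrable (fun s => J (T * s)) volume 0 1 := by
  have h1 : IntervalIntegrable J volume 0 T := by
    rw [intervalIntegrable_iff_integrableOn_Icc_of_le hT.le]
    exact hJloc.integrableOn_isCompact isCompact_Icc
  simpa [zero_div, div_self hT.ne'] using h1.comp_mul_left (c := T)

lemma wda_G_eq (J : ℝ → ℝ) {T : ℝ} (hT : 0 < T) (u : ℝ) :
    (∫ s in (0:ℝ)..u, J (T * s)) = (1 / T) * ∫ t in (0:ℝ)..(T * u), J t := by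
  rw [intervalIntegral.integral_comp_mul_left J hT.ne']
  simp [smul_eq_mul, one_div]

lemma wda_G_bound (J : ℝ → ℝ) (B : ℝ) (hB : ∀ t : ℝ, |J t| ≤ B) {T : ℝ}
    {u : ℝ} (hu : u ∈ Icc (0:ℝ) 1) :
    |∫ s in (0:ℝ)..u, J (T * s)| ≤ B := by
  have hB0 : 0 ≤ B := (abs_nonneg _).trans (hB 0)
  have h := intervalIntegral.norm_integral_le_of_norm_le_const
    (C := B) (f := fun s => J (T * s)) (a := 0) (b := u) (fun x _ => hB _)
  rw [Real.norm_eq_abs] at h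
  refine h.trans ?_
  rw [sub_zero, abs_of_nonneg hu.1]
  nlinarith [hu.2]

lemma wda_G1_tendsto (J : ℝ → ℝ) (LJ : ℝ)
    (hJ : Tendsto (fun T : ℝ => (1 / T) * ∫ t in (0:ℝ)..T, J t) atTop (nhds LJ)) :
    Tendsto (fun T : ℝ => ∫ s in (0:ℝ)..1, J (T * s)) atTop (nhds LJ) := by
  apply hJ.congr'
  filter_upwards [eventually_gt_atTop (0:ℝ)] with T hT
  rw [wda_G_eq J hT 1, mul_one]

lemma wda_Gu_tendsto (J : ℝ → ℝ) (LJ : ℝ)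
    (hJ : Tendsto (fun T : ℝ => (1 / T) * ∫ t in (0:ℝ)..T, J t) atTop (nhds LJ))
    {u : ℝ} (hu : 0 < u) :
    Tendsto (fun T : ℝ => ∫ s in (0:ℝ)..u, J (T * s)) atTop (nhds (LJ * u)) := by
  have h1 : Tendsto (fun T : ℝ => T * u) atTop atTop :=
    Tendsto.atTop_mul_const hu tendsto_id
  have h2 := (hJ.comp h1).const_mul u
  rw [mul_comm u LJ] at h2
  apply h2.congr'
  filter_upwards [eventually_gt_atTop (0:ℝ)] with T hT
  have hTu : 0 < T * u := mul_pos hT hu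
  rw [Function.comp_apply, wda_G_eq J hT u]
  field_simp

lemma wda_fubini (K : ℝ → ℝ) (hK : IntervalIntegrable K volume 0 1)
    (v v' : ℝ → ℝ) (hv : ∀ s, HasDerivAt v (v' s) s) (hv'c : Continuous v') :
    (∫ s in (0:ℝ)..1, v s * K s) =
      v 0 * (∫ s in (0:ℝ)..1, K s) +
        ∫ u in (0:ℝ)..1, v' u * ((∫ s in (0:ℝ)..1, K s) - ∫ s in (0:ℝ)..u, K s) := by
  have hvc : Continuous v := by
    refine continuous_iff_continuousAt.2 fun s => (hv s).continuousAt
  have hKI : IntegrableOn K (Ioc 0 1) volume :=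
    (intervalIntegrable_iff_integrableOn_Ioc_of_le zero_le_one).1 hK
  have hFTC : ∀ s : ℝ, (∫ u in (0:ℝ)..s, v' u) = v s - v 0 := fun s =>
    intervalIntegral.integral_eq_sub_of_hasDerivAt (fun u _ => hv u)
      (hv'c.intervalIntegrable 0 s)
  -- split off the constant part
  have hsplit : (∫ s in (0:ℝ)..1, v s * K s)
      = v 0 * (∫ s in (0:ℝ)..1, K s) + ∫ s in (0:ℝ)..1, (v s - v 0) * K s := by
    rw [← intervalIntegral.integral_const_mul, ← intervalIntegral.integral_add
      (hK.const_mul (v 0))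
      (hK.continuousOn_mul ((show Continuous (fun s => v s - v 0) from hvc.sub continuous_const).continuousOn))]
    apply intervalIntegral.integral_congr
    intro s _; ring
  rw [hsplit]
  congr 1
  -- the Fubini part
  set f : ℝ → ℝ → ℝ := fun s u => (Ioc 0 s).indicator v' u * K s with hf
  have hsetm : MeasurableSet {p : ℝ × ℝ | p.2 ∈ Ioc 0 p.1} := by
    have : {p : ℝ × ℝ | p.2 ∈ Ioc 0 p.1}
        = {p : ℝ × ℝ | (0:ℝ) < p.2} ∩ {p : ℝ × ℝ | p.2 ≤ p.1} := rfl
    rw [this]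
    exact (measurableSet_lt measurable_const measurable_snd).inter
      (measurableSet_le measurable_snd measurable_fst)
  have hbase : Integrable (fun p : ℝ × ℝ => K p.1 * v' p.2)
      ((volume.restrict (Ioc 0 1)).prod (volume.restrict (Ioc 0 1))) :=
    hKI.mul_prod (hv'c.integrableOn_Ioc)
  have huncurry : Function.uncurry f
      = {p : ℝ × ℝ | p.2 ∈ Ioc 0 p.1}.indicator (fun p => K p.1 * v' p.2) := by
    funext p
    rw [Function.uncurry_def, Set.indicator_apply]
    by_cases hp : p.2 ∈ Ioc 0 p.1
    · rw [if_pos (show p ∈ {p : ℝ × ℝ | p.2 ∈ Ioc 0 p.1} from hp), hf]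
      simp only [indicator_of_mem hp, mul_comm]
    · rw [if_neg (show p ∉ {p : ℝ × ℝ | p.2 ∈ Ioc 0 p.1} from hp), hf]
      simp only [indicator_of_notMem hp, zero_mul]
  have hint : Integrable (Function.uncurry f)
      ((volume.restrict (Ioc 0 1)).prod (volume.restrict (Ioc 0 1))) := by
    rw [huncurry]; exact hbase.indicator hsetm
  have hswap := MeasureTheory.integral_integral_swap hint
  -- LHS of swap equals our integral
  have hL : (∫ s in Ioc (0:ℝ) 1, ∫ u in Ioc (0:ℝ) 1, f s u) =
      ∫ s in (0:ℝ)..1, (v s - v 0) * K s := by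
    rw [intervalIntegral.integral_of_le zero_le_one]
    apply setIntegral_congr_fun measurableSet_Ioc
    intro s hs
    have h1 : (∫ u in Ioc (0:ℝ) 1, (Ioc 0 s).indicator v' u) = v s - v 0 := by
      rw [setIntegral_indicator measurableSet_Ioc,
        inter_eq_self_of_subset_right (Ioc_subset_Ioc_right hs.2),
        ← intervalIntegral.integral_of_le hs.1.le, hFTC]
    calc ∫ u in Ioc (0:ℝ) 1, f s u
        = (∫ u in Ioc (0:ℝ) 1, (Ioc 0 s).indicator v' u) * K s := by
          rw [← integral_mul_const]
      _ = (v s - v 0) * K s := by rw [h1]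
  -- RHS of swap equals the target
  have hR : (∫ u in Ioc (0:ℝ) 1, ∫ s in Ioc (0:ℝ) 1, f s u) =
      ∫ u in (0:ℝ)..1, v' u * ((∫ s in (0:ℝ)..1, K s) - ∫ s in (0:ℝ)..u, K s) := by
    rw [intervalIntegral.integral_of_le zero_le_one]
    apply setIntegral_congr_fun measurableSet_Ioc
    intro u hu
    have hKu : IntervalIntegrable K volume 0 u := by
      apply hK.mono_set
      rw [uIcc_of_le zero_le_one, uIcc_of_le hu.1.le]
      exact Icc_subset_Icc le_rfl hu.2
    have hptwise : ∀ s : ℝ, f s u = (Ici u).indicator (fun s => v' u * K s) s := by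
      intro s
      simp only [hf, Set.indicator_apply]
      by_cases hsu : u ≤ s
      · rw [if_pos (show u ∈ Ioc 0 s from ⟨hu.1, hsu⟩), if_pos (show s ∈ Ici u from hsu)]
      · rw [if_neg (show u ∉ Ioc 0 s from fun h => hsu h.2),
          if_neg (show s ∉ Ici u from hsu), zero_mul]
    have hIcc : Ioc (0:ℝ) 1 ∩ Ici u = Icc u 1 := by
      ext s
      constructor
      · rintro ⟨⟨_, h1⟩, h2⟩; exact ⟨h2, h1⟩
      · rintro ⟨h2, h1⟩; exact ⟨⟨lt_of_lt_of_le hu.1 h2, h1⟩, h2⟩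
    calc ∫ s in Ioc (0:ℝ) 1, f s u
        = ∫ s in Ioc (0:ℝ) 1, (Ici u).indicator (fun s => v' u * K s) s := by
          simp_rw [hptwise]
      _ = ∫ s in Ioc (0:ℝ) 1 ∩ Ici u, v' u * K s := setIntegral_indicator measurableSet_Ici
      _ = ∫ s in Icc u 1, v' u * K s := by rw [hIcc]
      _ = ∫ s in Ioc u 1, v' u * K s := integral_Icc_eq_integral_Ioc
      _ = ∫ s in u..1, v' u * K s := (intervalIntegral.integral_of_le hu.2).symm
      _ = v' u * ∫ s in u..1, K s := intervalIntegral.integral_const_mul _ _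
      _ = v' u * ((∫ s in (0:ℝ)..1, K s) - ∫ s in (0:ℝ)..u, K s) := by
          rw [intervalIntegral.integral_interval_sub_left hK hKu]
  rw [← hL, hswap, hR]

lemma wda_smooth (J : ℝ → ℝ) (B LJ : ℝ) (hB : ∀ t : ℝ, |J t| ≤ B)
    (hJloc : LocallyIntegrable J)
    (hJ : Tendsto (fun T : ℝ => (1 / T) * ∫ t in (0:ℝ)..T, J t) atTop (nhds LJ))
    (v v' : ℝ → ℝ) (hv : ∀ s, HasDerivAt v (v' s) s) (hv'c : Continuous v') :
    Tendsto (fun T : ℝ => ∫ s in (0:ℝ)..1, v s * J (T * s)) atTop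
      (nhds ((∫ s in (0:ℝ)..1, v s) * LJ)) := by
  have hvc : Continuous v := continuous_iff_continuousAt.2 fun s => (hv s).continuousAt
  obtain ⟨C, hC⟩ := isCompact_Icc.exists_bound_of_continuousOn hv'c.continuousOn
  have hC0 : 0 ≤ C := (norm_nonneg _).trans (hC 0 (left_mem_Icc.2 zero_le_one))
  -- dominated convergence for the second term
  have hDCT : Tendsto (fun T : ℝ => ∫ u in Ioc (0:ℝ) 1,
      v' u * ((∫ s in (0:ℝ)..1, J (T * s)) - ∫ s in (0:ℝ)..u, J (T * s)))
      atTop (nhds (∫ u in Ioc (0:ℝ) 1, v' u * (LJ - LJ * u))) := by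
    apply tendsto_integral_filter_of_dominated_convergence (fun _ => C * (2 * B))
    · filter_upwards [eventually_gt_atTop (0:ℝ)] with T hT
      have hKIcc : IntegrableOn (fun s => J (T * s)) (uIcc (0:ℝ) 1) volume := by
        rw [uIcc_of_le zero_le_one]
        exact (intervalIntegrable_iff_integrableOn_Icc_of_le zero_le_one).1
          (wda_intble J hJloc hT)
      have hGcont : ContinuousOn (fun u => ∫ s in (0:ℝ)..u, J (T * s)) (Icc (0:ℝ) 1) := by
        have := intervalIntegral.continuousOn_primitive_interval hKIcc
        rwa [uIcc_of_le zero_le_one] at this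
      exact ((hv'c.continuousOn.mul (continuousOn_const.sub hGcont)).mono
        Ioc_subset_Icc_self).aestronglyMeasurable measurableSet_Ioc
    · filter_upwards [eventually_gt_atTop (0:ℝ)] with T hT
      rw [ae_restrict_iff' measurableSet_Ioc]
      refine Eventually.of_forall fun u hu => ?_
      have h1 : |v' u| ≤ C := by
        have := hC u (Ioc_subset_Icc_self hu); rwa [Real.norm_eq_abs] at this
      have h2 : |(∫ s in (0:ℝ)..1, J (T * s)) - ∫ s in (0:ℝ)..u, J (T * s)| ≤ 2 * B := by
        refine (abs_sub _ _).trans ?_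
        have ha := wda_G_bound J B hB (T := T) (right_mem_Icc.2 zero_le_one)
        have hb := wda_G_bound J B hB (T := T) (Ioc_subset_Icc_self hu)
        linarith
      rw [Real.norm_eq_abs, abs_mul]
      exact mul_le_mul h1 h2 (abs_nonneg _) hC0
    · exact integrableOn_const measure_Ioc_lt_top.ne
    · rw [ae_restrict_iff' measurableSet_Ioc]
      refine Eventually.of_forall fun u hu => ?_
      exact ((wda_G1_tendsto J LJ hJ).sub (wda_Gu_tendsto J LJ hJ hu.1)).const_mul (v' u)
  -- combine with the Fubini identity
  have hmain : Tendsto (fun T : ℝ => v 0 * (∫ s in (0:ℝ)..1, J (T * s)) +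
      ∫ u in (0:ℝ)..1, v' u * ((∫ s in (0:ℝ)..1, J (T * s)) - ∫ s in (0:ℝ)..u, J (T * s)))
      atTop (nhds (v 0 * LJ + ∫ u in Ioc (0:ℝ) 1, v' u * (LJ - LJ * u))) := by
    refine ((wda_G1_tendsto J LJ hJ).const_mul (v 0)).add ?_
    exact hDCT.congr fun T => (intervalIntegral.integral_of_le zero_le_one).symm
  -- compute the limit value
  have hIBP : ∫ u in (0:ℝ)..1, ((1 - u) * v' u - v u) = -v 0 := by
    have hg : ∀ u : ℝ, HasDerivAt (fun u : ℝ => (1 - u) * v u)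
        ((1 - u) * v' u - v u) u := by
      intro u
      have h1 : HasDerivAt (fun u : ℝ => 1 - u) (-1) u := (hasDerivAt_id u).const_sub 1
      have : HasDerivAt (fun u : ℝ => (1 - u) * v u) (-1 * v u + (1 - u) * v' u) u := h1.mul (hv u)
      convert this using 1
      ring
    have := intervalIntegral.integral_eq_sub_of_hasDerivAt (fun u _ => hg u)
      ((((continuous_const.sub continuous_id).mul hv'c).sub hvc).intervalIntegrable 0 1)
    simpa using this
  have h4 : ∫ u in (0:ℝ)..1, (1 - u) * v' u = (∫ u in (0:ℝ)..1, v u) - v 0 := by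
    have hc1 : Continuous fun u : ℝ => (1 - u) * v' u :=
      (continuous_const.sub continuous_id).mul hv'c
    have h5 : ∫ u in (0:ℝ)..1, ((1 - u) * v' u - v u)
        = (∫ u in (0:ℝ)..1, (1 - u) * v' u) - ∫ u in (0:ℝ)..1, v u :=
      intervalIntegral.integral_sub (hc1.intervalIntegrable 0 1)
        (hvc.intervalIntegrable 0 1)
    rw [hIBP] at h5
    linarith
  have hval : ∫ u in Ioc (0:ℝ) 1, v' u * (LJ - LJ * u)
      = LJ * ((∫ u in (0:ℝ)..1, v u) - v 0) := by
    rw [← intervalIntegral.integral_of_le zero_le_one]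
    calc ∫ u in (0:ℝ)..1, v' u * (LJ - LJ * u)
        = ∫ u in (0:ℝ)..1, LJ * ((1 - u) * v' u) := by
          apply intervalIntegral.integral_congr; intro u _; ring
      _ = LJ * ∫ u in (0:ℝ)..1, (1 - u) * v' u := intervalIntegral.integral_const_mul _ _
      _ = LJ * ((∫ u in (0:ℝ)..1, v u) - v 0) := by rw [h4]
  have hfinal : v 0 * LJ + ∫ u in Ioc (0:ℝ) 1, v' u * (LJ - LJ * u)
      = (∫ s in (0:ℝ)..1, v s) * LJ := by rw [hval]; ring
  rw [← hfinal]
  apply hmain.congr'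
  filter_upwards [eventually_gt_atTop (0:ℝ)] with T hT
  exact (wda_fubini (fun s => J (T * s)) (wda_intble J hJloc hT) v v' hv hv'c).symm

lemma wda_core (J : ℝ → ℝ) (B LJ : ℝ) (hB : ∀ t : ℝ, |J t| ≤ B)
    (hJloc : LocallyIntegrable J)
    (hJ : Tendsto (fun T : ℝ => (1 / T) * ∫ t in (0:ℝ)..T, J t) atTop (nhds LJ))
    (v : ℝ → ℝ) (hvc : Continuous v) :
    Tendsto (fun T : ℝ => ∫ s in (0:ℝ)..1, v s * J (T * s)) atTop
      (nhds ((∫ s in (0:ℝ)..1, v s) * LJ)) := by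
  have hB0 : 0 ≤ B := (abs_nonneg _).trans (hB 0)
  rw [Metric.tendsto_nhds]
  intro ε hε
  set D : ℝ := B + |LJ| + 1 with hD
  have hDpos : 0 < D := by positivity
  set δ : ℝ := ε / (3 * D) with hδ
  have hδpos : 0 < δ := by positivity
  have hδD : δ * D = ε / 3 := by
    rw [hδ]; field_simp
  have hδB : δ * B ≤ ε / 3 := by
    calc δ * B ≤ δ * D := by nlinarith [abs_nonneg LJ]
      _ = ε / 3 := hδD
  have hδLJ : δ * |LJ| ≤ ε / 3 := by
    calc δ * |LJ| ≤ δ * D := by nlinarith [abs_nonneg LJ]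
      _ = ε / 3 := hδD
  obtain ⟨p, hp⟩ := exists_polynomial_near_of_continuousOn 0 1 v hvc.continuousOn δ hδpos
  have hpc : Continuous fun x : ℝ => p.eval x := p.continuous
  have hsm := wda_smooth J B LJ hB hJloc hJ (fun x => p.eval x)
      (fun x => (Polynomial.derivative p).eval x) (fun x => p.hasDerivAt x)
      (Polynomial.derivative p).continuous
  have hev := Metric.tendsto_nhds.1 hsm (ε / 3) (by positivity)
  filter_upwards [hev, eventually_gt_atTop (0:ℝ)] with T hT1 hT2
  have hK : IntervalIntegrable (fun s => J (T * s)) volume 0 1 := wda_intble J hJloc hT2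
  -- |∫ v·K − ∫ p·K| ≤ δ * B
  have h1 : |(∫ s in (0:ℝ)..1, v s * J (T * s)) - ∫ s in (0:ℝ)..1, p.eval s * J (T * s)|
      ≤ δ * B := by
    rw [← intervalIntegral.integral_sub (hK.continuousOn_mul hvc.continuousOn)
      (hK.continuousOn_mul hpc.continuousOn)]
    have := intervalIntegral.norm_integral_le_of_norm_le_const
      (C := δ * B) (f := fun s => v s * J (T * s) - p.eval s * J (T * s)) (a := 0) (b := 1)
      (fun x hx => by
        rw [uIoc_of_le zero_le_one] at hx
        have hxm : x ∈ Icc (0:ℝ) 1 := Ioc_subset_Icc_self hx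
        have : v x * J (T * x) - Polynomial.eval x p * J (T * x)
            = (v x - p.eval x) * J (T * x) := by ring
        show |v x * J (T * x) - Polynomial.eval x p * J (T * x)| ≤ δ * B
        rw [this, abs_mul]
        refine mul_le_mul ?_ (hB _) (abs_nonneg _) hδpos.le
        rw [abs_sub_comm]
        exact (hp x hxm).le)
    rw [Real.norm_eq_abs] at this
    simpa using this
  -- |∫ p − ∫ v| ≤ δ
  have h2 : |(∫ s in (0:ℝ)..1, p.eval s) - ∫ s in (0:ℝ)..1, v s| ≤ δ := by
    rw [← intervalIntegral.integral_sub (hpc.intervalIntegrable 0 1)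
      (hvc.intervalIntegrable 0 1)]
    have := intervalIntegral.norm_integral_le_of_norm_le_const
      (C := δ) (f := fun s => p.eval s - v s) (a := 0) (b := 1)
      (fun x hx => by
        rw [uIoc_of_le zero_le_one] at hx
        show |Polynomial.eval x p - v x| ≤ δ
        exact (hp x (Ioc_subset_Icc_self hx)).le)
    rw [Real.norm_eq_abs] at this
    simpa using this
  rw [Real.dist_eq] at hT1 ⊢
  have h3 : |(∫ s in (0:ℝ)..1, p.eval s) * LJ - (∫ s in (0:ℝ)..1, v s) * LJ| ≤ δ * |LJ| := by
    have : (∫ s in (0:ℝ)..1, p.eval s) * LJ - (∫ s in (0:ℝ)..1, v s) * LJ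
        = ((∫ s in (0:ℝ)..1, p.eval s) - ∫ s in (0:ℝ)..1, v s) * LJ := by ring
    rw [this, abs_mul]
    exact mul_le_mul_of_nonneg_right h2 (abs_nonneg _)
  have tri1 := abs_sub_le (∫ s in (0:ℝ)..1, v s * J (T * s))
    (∫ s in (0:ℝ)..1, p.eval s * J (T * s)) ((∫ s in (0:ℝ)..1, v s) * LJ)
  have tri2 := abs_sub_le (∫ s in (0:ℝ)..1, p.eval s * J (T * s))
    ((∫ s in (0:ℝ)..1, p.eval s) * LJ) ((∫ s in (0:ℝ)..1, v s) * LJ)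
  linarith


/-- Lemma 4: if `J` is bounded, locally integrable, with ergodic average `⟨J⟩ = LJ`,
`w` is continuously differentiable on `[0,1]` (with derivative `w'`) and
`w 0 = w 1 = 0`, and `tau : (0,∞) → ℝ` is such that `š = lim_{T→∞} tau T / T` exists,
then `lim_{T→∞} (1/T)∫₀ᵀ w'(t/T)·((t − tau T)/T)·J(t) dt = −w̄·⟨J⟩`
where `w̄ = ∫₀¹ w`. -/
theorem windowed_derivative_average_eq_neg_mean_mul_average
    (J w w' : ℝ → ℝ) (tau : ℝ → ℝ) (LJ sc : ℝ)
    (hJb : ∃ B : ℝ, ∀ t : ℝ, |J t| ≤ B)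
    (hJloc : LocallyIntegrable J)
    (hJ : Tendsto (fun T : ℝ => (1 / T) * ∫ t in (0:ℝ)..T, J t) atTop (nhds LJ))
    (hw : ∀ s ∈ Icc (0:ℝ) 1, HasDerivWithinAt w (w' s) (Icc (0:ℝ) 1) s)
    (hw'c : ContinuousOn w' (Icc (0:ℝ) 1))
    (hw0 : w 0 = 0) (hw1 : w 1 = 0)
    (htau : Tendsto (fun T : ℝ => tau T / T) atTop (nhds sc)) :
    Tendsto (fun T : ℝ =>
        (1 / T) * ∫ t in (0:ℝ)..T, w' (t / T) * ((t - tau T) / T) * J t)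
      atTop (nhds (-(∫ s in (0:ℝ)..1, w s) * LJ)) := by
  obtain ⟨B, hB⟩ := hJb
  have hwcont : ContinuousOn w (Icc (0:ℝ) 1) := fun x hx => (hw x hx).continuousWithinAt
  set ve : ℝ → ℝ := IccExtend zero_le_one ((Icc (0:ℝ) 1).restrict w') with hve_def
  have hvec : Continuous ve := (continuousOn_iff_continuous_restrict.mp hw'c).Icc_extend'
  have hve : ∀ x ∈ Icc (0:ℝ) 1, ve x = w' x := by
    intro x hx
    rw [hve_def, IccExtend_of_mem _ _ hx]
    rfl
  have hw'int : IntervalIntegrable w' volume 0 1 := by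
    apply ContinuousOn.intervalIntegrable
    rwa [uIcc_of_le zero_le_one]
  have hFTC1 : ∫ u in (0:ℝ)..1, w' u = 0 := by
    rw [intervalIntegral.integral_eq_sub_of_hasDeriv_right_of_le zero_le_one hwcont
      (fun x hx => ((hw x (Ioo_subset_Icc_self hx)).hasDerivAt
        (Icc_mem_nhds hx.1 hx.2)).hasDerivWithinAt) hw'int, hw0, hw1, sub_zero]
  have hg : ∀ x ∈ Ioo (0:ℝ) 1,
      HasDerivWithinAt (fun u => u * w u) (w x + x * w' x) (Ioi x) x := by
    intro x hx
    have hd : HasDerivAt w (w' x) x := (hw x (Ioo_subset_Icc_self hx)).hasDerivAt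
      (Icc_mem_nhds hx.1 hx.2)
    have h1 : HasDerivAt (fun u => u * w u) (1 * w x + id x * w' x) x := (hasDerivAt_id x).mul hd
    have h2 : HasDerivAt (fun u => u * w u) (w x + x * w' x) x := by
      convert h1 using 1
      simp only [id_eq]
      ring
    exact h2.hasDerivWithinAt
  have hwint : IntervalIntegrable w volume 0 1 := by
    apply ContinuousOn.intervalIntegrable; rwa [uIcc_of_le zero_le_one]
  have huw'int : IntervalIntegrable (fun u => u * w' u) volume 0 1 := by
    apply ContinuousOn.intervalIntegrable
    rw [uIcc_of_le zero_le_one]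
    exact continuousOn_id.mul hw'c
  have hsumint : IntervalIntegrable (fun u => w u + u * w' u) volume 0 1 := by
    apply ContinuousOn.intervalIntegrable
    rw [uIcc_of_le zero_le_one]
    exact hwcont.add (continuousOn_id.mul hw'c)
  have hFTC2 : ∫ u in (0:ℝ)..1, (w u + u * w' u) = 0 := by
    rw [intervalIntegral.integral_eq_sub_of_hasDeriv_right_of_le zero_le_one
      (continuousOn_id.mul hwcont) hg hsumint]
    simp [hw1]
  have hIBP : ∫ u in (0:ℝ)..1, u * w' u = -∫ u in (0:ℝ)..1, w u := by
    have h3 := intervalIntegral.integral_add hwint huw'int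
    rw [hFTC2] at h3
    linarith
  have hcongr2 : ∫ s in (0:ℝ)..1, ve s = ∫ s in (0:ℝ)..1, w' s := by
    apply intervalIntegral.integral_congr
    intro x hx
    rw [uIcc_of_le zero_le_one] at hx
    exact hve x hx
  have hv2val : ∫ s in (0:ℝ)..1, ve s = 0 := by rw [hcongr2, hFTC1]
  have hcongr1 : ∫ s in (0:ℝ)..1, s * ve s = ∫ s in (0:ℝ)..1, s * w' s := by
    apply intervalIntegral.integral_congr
    intro x hx
    rw [uIcc_of_le zero_le_one] at hx
    show x * ve x = x * w' x
    rw [hve x hx]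
  have hv1val : ∫ s in (0:ℝ)..1, s * ve s = -∫ s in (0:ℝ)..1, w s := by
    rw [hcongr1, hIBP]
  have core1 := wda_core J B LJ hB hJloc hJ (fun s => s * ve s) (continuous_id.mul hvec)
  have core2 := wda_core J B LJ hB hJloc hJ ve hvec
  have hcomb := core1.sub (htau.mul core2)
  have heq : -(∫ s in (0:ℝ)..1, w s) * LJ
      = (∫ s in (0:ℝ)..1, (fun s => s * ve s) s) * LJ
        - sc * ((∫ s in (0:ℝ)..1, ve s) * LJ) := by
    simp only []
    rw [hv1val, hv2val]
    ring
  rw [heq]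
  apply hcomb.congr'
  filter_upwards [eventually_ge_atTop (1:ℝ)] with T hT1
  have hT : 0 < T := lt_of_lt_of_le one_pos hT1
  have hK := wda_intble J hJloc hT
  have hcv := intervalIntegral.integral_comp_mul_left
    (f := fun t => w' (t / T) * ((t - tau T) / T) * J t) (a := 0) (b := 1) hT.ne'
  rw [mul_zero, mul_one, smul_eq_mul] at hcv
  beta_reduce at hcv
  have e1 : (1 / T) * ∫ t in (0:ℝ)..T, w' (t / T) * ((t - tau T) / T) * J t
      = ∫ s in (0:ℝ)..1, w' (T * s / T) * ((T * s - tau T) / T) * J (T * s) := by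
    rw [hcv, one_div]
  have e2 : (∫ s in (0:ℝ)..1, w' (T * s / T) * ((T * s - tau T) / T) * J (T * s))
      = ∫ s in (0:ℝ)..1, (s * ve s - tau T / T * ve s) * J (T * s) := by
    apply intervalIntegral.integral_congr
    intro x hx
    rw [uIcc_of_le zero_le_one] at hx
    have hx' : T * x / T = x := by field_simp
    show w' (T * x / T) * ((T * x - tau T) / T) * J (T * x)
        = (x * ve x - tau T / T * ve x) * J (T * x)
    rw [sub_div, hx', ← hve x hx]
    ring
  have e3 : ∫ s in (0:ℝ)..1, (s * ve s - tau T / T * ve s) * J (T * s)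
      = (∫ s in (0:ℝ)..1, s * ve s * J (T * s))
        - tau T / T * ∫ s in (0:ℝ)..1, ve s * J (T * s) := by
    have hgc : Continuous fun x : ℝ => x * ve x := continuous_id.mul hvec
    rw [← intervalIntegral.integral_const_mul, ← intervalIntegral.integral_sub
      (hK.continuousOn_mul hgc.continuousOn)
      ((hK.continuousOn_mul hvec.continuousOn).const_mul _)]
    apply intervalIntegral.integral_congr
    intro x _
    ring
  show (∫ s in (0:ℝ)..1, (fun s => s * ve s) s * J (T * s))
      - tau T / T * ∫ s in (0:ℝ)..1, ve s * J (T * s)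
      = (1 / T) * ∫ t in (0:ℝ)..T, w' (t / T) * ((t - tau T) / T) * J t
  simp only []
  rw [e1, e2, e3]
end

section
/- Let η : ℝ → ℝ and J : ℝ → ℝ be bounded and locally integrable, and suppose the ergodic averages ⟨η⟩ = lim_{T→∞} (1/T)∫₀ᵀ η(t) dt and ⟨J⟩ = lim_{T→∞} (1/T)∫₀ᵀ J(t) dt both exist. Let w : [0,1] → ℝ be continuously differentiable with w(0) = w(1) = 0 and mean w̄ = ∫₀¹ w(s) ds, and let τ̌ : (0,∞) → ℝ satisfy 0 ≤ τ̌(T) ≤ T for all T and lim_{T→∞} τ̌(T)/T exists. Then lim_{T→∞} (1/T)∫₀ᵀ w'(t/T) · (1/T)(∫_{τ̌(T)}^{t} η(τ) dτ) · J(t) dt = −w̄ · ⟨η⟩ · ⟨J⟩. -/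
open MeasureTheory Filter Set

namespace WindowedAux

lemma locInt {f : ℝ → ℝ} (hf : LocallyIntegrable f) (a b : ℝ) :
    IntervalIntegrable f volume a b :=
  (hf.integrableOn_isCompact isCompact_uIcc).intervalIntegrable

lemma tendsto_of_eps {f : ℝ → ℝ} {l : ℝ}
    (h : ∀ ε : ℝ, 0 < ε → ∀ᶠ T in atTop, |f T - l| ≤ ε) :
    Tendsto f atTop (nhds l) := by
  rw [Metric.tendsto_nhds]
  intro ε hε
  filter_upwards [h (ε / 2) (by linarith)] with T hT
  rw [Real.dist_eq]
  linarith

lemma sublinear {f : ℝ → ℝ} {B L : ℝ} (hb : ∀ t, |f t| ≤ B)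
    (hf : Tendsto (fun T : ℝ => (1 / T) * ∫ t in (0:ℝ)..T, f t) atTop (nhds L))
    {ε : ℝ} (hε : 0 < ε) :
    ∀ᶠ T in atTop, ∀ t ∈ Icc (0:ℝ) T, |(∫ τ in (0:ℝ)..t, f τ) - L * t| ≤ ε * T := by
  have hB0 : 0 ≤ B := (abs_nonneg _).trans (hb 0)
  set C : ℝ := B + |L| + 1 with hC
  have hC0 : 0 < C := by positivity
  set δ : ℝ := ε / C with hδdef
  have hδ0 : 0 < δ := by positivity
  obtain ⟨t₀, ht₀⟩ := (Metric.tendsto_atTop.1 hf) ε hε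
  set t₁ : ℝ := max t₀ 1 with ht₁def
  have ht₁pos : (0:ℝ) < t₁ := lt_of_lt_of_le one_pos (le_max_right _ _)
  have h4 : ∀ t : ℝ, t₁ ≤ t → |(∫ τ in (0:ℝ)..t, f τ) - L * t| ≤ ε * t := by
    intro t ht
    have ht0 : 0 < t := lt_of_lt_of_le ht₁pos ht
    have h3 := ht₀ t (le_trans (le_max_left _ _) ht)
    rw [Real.dist_eq] at h3
    have hkey : (∫ τ in (0:ℝ)..t, f τ) - L * t
        = t * ((1 / t) * (∫ τ in (0:ℝ)..t, f τ) - L) := by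
      field_simp
    rw [hkey, abs_mul, abs_of_pos ht0, mul_comm ε t]
    exact mul_le_mul_of_nonneg_left h3.le ht0.le
  filter_upwards [eventually_ge_atTop (max t₁ (t₁ / δ))] with T hT
  intro t ht
  have hT1 : t₁ ≤ T := le_trans (le_max_left _ _) hT
  have hT0 : 0 < T := lt_of_lt_of_le ht₁pos hT1
  by_cases hcase : t₁ ≤ t
  · exact (h4 t hcase).trans (mul_le_mul_of_nonneg_left ht.2 hε.le)
  · push_neg at hcase
    have hIb : |∫ τ in (0:ℝ)..t, f τ| ≤ B * t := by
      have := intervalIntegral.norm_integral_le_of_norm_le_const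
        (a := 0) (b := t) (C := B) (f := f)
        (fun x _ => by rw [Real.norm_eq_abs]; exact hb x)
      rw [Real.norm_eq_abs, sub_zero, abs_of_nonneg ht.1] at this
      exact this
    have h5 : |(∫ τ in (0:ℝ)..t, f τ) - L * t| ≤ B * t + |L| * t := by
      have h6 := abs_add_le (∫ τ in (0:ℝ)..t, f τ) (-(L * t))
      rw [← sub_eq_add_neg, abs_neg, abs_mul] at h6
      have h7 : |L| * |t| = |L| * t := by rw [abs_of_nonneg ht.1]
      rw [h7] at h6
      exact h6.trans (by linarith)
    have h8 : B * t + |L| * t ≤ C * t₁ := by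
      have : B * t + |L| * t = (B + |L|) * t := by ring
      rw [this]
      have h9 : (B + |L|) * t ≤ (B + |L|) * t₁ :=
        mul_le_mul_of_nonneg_left hcase.le (by positivity)
      have h10 : (B + |L|) * t₁ ≤ C * t₁ := by
        apply mul_le_mul_of_nonneg_right _ ht₁pos.le
        rw [hC]; linarith
      linarith
    have h11 : t₁ ≤ δ * T := by
      have := le_trans (le_max_right t₁ (t₁ / δ)) hT
      calc t₁ = δ * (t₁ / δ) := by field_simp
        _ ≤ δ * T := mul_le_mul_of_nonneg_left this hδ0.le
    have h12 : C * t₁ ≤ C * (δ * T) := mul_le_mul_of_nonneg_left h11 hC0.le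
    have h13 : C * (δ * T) = ε * T := by rw [hδdef]; field_simp
    linarith

lemma ratio {f : ℝ → ℝ} {L : ℝ} (hloc : LocallyIntegrable f)
    (hf : Tendsto (fun T : ℝ => (1 / T) * ∫ t in (0:ℝ)..T, f t) atTop (nhds L))
    {c : ℝ} (hc : 0 ≤ c) :
    Tendsto (fun T : ℝ => (1 / T) * ∫ t in (0:ℝ)..(T * c), f t) atTop (nhds (L * c)) := by
  rcases eq_or_lt_of_le hc with h0 | h0
  · simp only [← h0, mul_zero, intervalIntegral.integral_same]
    simpa using tendsto_const_nhds
  · have h1 : Tendsto (fun T : ℝ => T * c) atTop atTop :=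
      Tendsto.atTop_mul_const h0 tendsto_id
    have h2 := (hf.comp h1).const_mul c
    have h3 : (fun T : ℝ => c * ((1 / (T * c)) * ∫ t in (0:ℝ)..(T * c), f t))
        =ᶠ[atTop] fun T : ℝ => (1 / T) * ∫ t in (0:ℝ)..(T * c), f t := by
      filter_upwards [eventually_gt_atTop 0] with T hT
      have hTc : T * c ≠ 0 := by positivity
      field_simp
    have h4 : Tendsto (fun T : ℝ =>
        c * ((1 / (T * c)) * ∫ t in (0:ℝ)..(T * c), f t)) atTop (nhds (c * L)) := h2
    rw [mul_comm c L] at h4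
    exact h4.congr' h3

lemma piece {f : ℝ → ℝ} {L : ℝ} (hloc : LocallyIntegrable f)
    (hf : Tendsto (fun T : ℝ => (1 / T) * ∫ t in (0:ℝ)..T, f t) atTop (nhds L))
    {a b : ℝ} (ha : 0 ≤ a) (hb : 0 ≤ b) :
    Tendsto (fun T : ℝ => ∫ s in a..b, f (T * s)) atTop (nhds (L * (b - a))) := by
  have h1 := (ratio hloc hf hb).sub (ratio hloc hf ha)
  have h2 : L * b - L * a = L * (b - a) := by ring
  rw [h2] at h1
  apply h1.congr'
  filter_upwards [eventually_gt_atTop 0] with T hT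
  rw [intervalIntegral.integral_comp_mul_left (f := f) hT.ne',
    ← intervalIntegral.integral_interval_sub_left (locInt hloc 0 (T * b))
      (locInt hloc 0 (T * a)), smul_eq_mul]
  ring

lemma weak {K : ℝ → ℝ} {B L : ℝ} (hKb : ∀ t, |K t| ≤ B) (hKloc : LocallyIntegrable K)
    (hK : Tendsto (fun T : ℝ => (1 / T) * ∫ t in (0:ℝ)..T, K t) atTop (nhds L))
    {g : ℝ → ℝ} (hg : Continuous g) :
    Tendsto (fun T : ℝ => (1 / T) * ∫ t in (0:ℝ)..T, g (t / T) * K t) atTop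
      (nhds ((∫ s in (0:ℝ)..1, g s) * L)) := by
  set B' : ℝ := |B| + 1 with hB'def
  have hB'0 : 0 < B' := by positivity
  have hB' : ∀ t, |K t| ≤ B' := fun t =>
    (hKb t).trans (by rw [hB'def]; linarith [le_abs_self B])
  set I : ℝ := ∫ s in (0:ℝ)..1, g s with hIdef
  have main : Tendsto (fun T : ℝ => ∫ s in (0:ℝ)..1, g s * K (T * s)) atTop (nhds (I * L)) := by
    apply tendsto_of_eps
    intro ε hε
    set ε₁ : ℝ := ε / (2 * (B' + |L| + 1)) with hε₁def
    have hε₁ : 0 < ε₁ := by positivity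
    have hUC : UniformContinuousOn g (Icc 0 1) :=
      isCompact_Icc.uniformContinuousOn_of_continuous hg.continuousOn
    rw [Metric.uniformContinuousOn_iff] at hUC
    obtain ⟨δ, hδ0, hδ⟩ := hUC ε₁ hε₁
    obtain ⟨m, hm⟩ := exists_nat_one_div_lt hδ0
    set n : ℕ := m + 1 with hndef
    have hnR : (0:ℝ) < n := by positivity
    have hn1 : (1:ℝ) / n < δ := by
      have : ((m:ℝ) + 1) = (n:ℝ) := by push_cast [hndef]; ring
      rwa [this] at hm
    set a : ℕ → ℝ := fun i => (i : ℝ) / n with hadef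
    have ha0 : a 0 = 0 := by simp [hadef]
    have han : a n = 1 := by rw [hadef]; exact div_self hnR.ne'
    have hstep : ∀ i : ℕ, a (i + 1) - a i = 1 / n := by
      intro i; rw [hadef]; push_cast; ring
    have hmono : ∀ i : ℕ, a i ≤ a (i + 1) := by
      intro i
      simp only [hadef]
      gcongr
      push_cast
      linarith
    have hmem : ∀ i : ℕ, i < n → ∀ x ∈ Icc (a i) (a (i + 1)), x ∈ Icc (0:ℝ) 1 := by
      intro i hi x hx
      constructor
      · exact le_trans (by positivity : (0:ℝ) ≤ a i) hx.1
      · refine hx.2.trans ?_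
        rw [hadef]
        rw [div_le_one hnR]
        exact_mod_cast hi
    have haimem : ∀ i : ℕ, i < n → a i ∈ Icc (0:ℝ) 1 := by
      intro i hi
      exact hmem i hi (a i) ⟨le_refl _, hmono i⟩
    have hclose : ∀ i : ℕ, i < n → ∀ x ∈ Icc (a i) (a (i + 1)), |g x - g (a i)| ≤ ε₁ := by
      intro i hi x hx
      have hd : dist x (a i) < δ := by
        rw [Real.dist_eq, abs_of_nonneg (by linarith [hx.1] : (0:ℝ) ≤ x - a i)]
        have : x - a i ≤ 1 / n := by
          have := hx.2
          have h2 := hstep i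
          linarith
        linarith
      have := hδ x (hmem i hi x hx) (a i) (haimem i hi) hd
      rw [Real.dist_eq] at this
      exact this.le
    -- limit of the Riemann-type sums
    have hSlim : Tendsto (fun T : ℝ => ∑ i ∈ Finset.range n,
        g (a i) * ∫ s in a i..a (i + 1), K (T * s)) atTop
        (nhds (∑ i ∈ Finset.range n, g (a i) * (L * (1 / n)))) := by
      apply tendsto_finset_sum
      intro i _
      have h0i : (0:ℝ) ≤ a i := by rw [hadef]; positivity
      have h0i1 : (0:ℝ) ≤ a (i + 1) := by rw [hadef]; positivity
      have := (piece hKloc hK h0i h0i1).const_mul (g (a i))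
      rwa [hstep i] at this
    rw [Metric.tendsto_atTop] at hSlim
    obtain ⟨N, hN⟩ := hSlim (ε / 2) (by linarith)
    filter_upwards [eventually_ge_atTop (max N 1)] with T hT
    have hT1 : (1:ℝ) ≤ T := le_trans (le_max_right _ _) hT
    have hT0 : (0:ℝ) < T := lt_of_lt_of_le one_pos hT1
    have hKT : ∀ p q : ℝ, IntervalIntegrable (fun s => K (T * s)) volume p q := by
      intro p q
      have := (locInt hKloc (T * p) (T * q)).comp_mul_left (c := T)
      rwa [mul_div_cancel_left₀ _ hT0.ne', mul_div_cancel_left₀ _ hT0.ne'] at this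
    have hint : ∀ p q : ℝ, IntervalIntegrable (fun s => g s * K (T * s)) volume p q :=
      fun p q => (hKT p q).continuousOn_mul hg.continuousOn
    have hsplit : (∫ s in (0:ℝ)..1, g s * K (T * s))
        = ∑ i ∈ Finset.range n, ∫ s in a i..a (i + 1), g s * K (T * s) := by
      rw [intervalIntegral.sum_integral_adjacent_intervals (fun i _ => hint _ _), ha0, han]
    have hsplitg : I = ∑ i ∈ Finset.range n, ∫ s in a i..a (i + 1), g s := by
      rw [hIdef, ← ha0, ← han]
      exact (intervalIntegral.sum_integral_adjacent_intervals
        (fun i _ => (hg.intervalIntegrable _ _))).symm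
    -- bound 1
    have hb1 : |(∫ s in (0:ℝ)..1, g s * K (T * s))
        - ∑ i ∈ Finset.range n, g (a i) * ∫ s in a i..a (i + 1), K (T * s)| ≤ ε₁ * B' := by
      rw [hsplit, ← Finset.sum_sub_distrib]
      refine (Finset.abs_sum_le_sum_abs _ _).trans ?_
      have hterm : ∀ i ∈ Finset.range n,
          |(∫ s in a i..a (i + 1), g s * K (T * s))
            - g (a i) * ∫ s in a i..a (i + 1), K (T * s)| ≤ ε₁ * B' * (1 / n) := by
        intro i hi
        rw [Finset.mem_range] at hi
        rw [← intervalIntegral.integral_const_mul,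
          ← intervalIntegral.integral_sub (hint _ _) ((hKT _ _).const_mul _)]
        have hbd : ∀ x ∈ uIoc (a i) (a (i + 1)),
            ‖g x * K (T * x) - g (a i) * K (T * x)‖ ≤ ε₁ * B' := by
          intro x hx
          rw [uIoc_of_le (hmono i)] at hx
          have hxI : x ∈ Icc (a i) (a (i + 1)) := ⟨hx.1.le, hx.2⟩
          have h1 : g x * K (T * x) - g (a i) * K (T * x) = (g x - g (a i)) * K (T * x) := by
            ring
          rw [Real.norm_eq_abs, h1, abs_mul]
          exact mul_le_mul (hclose i hi x hxI) (hB' _) (abs_nonneg _) hε₁.le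
        have := intervalIntegral.norm_integral_le_of_norm_le_const hbd
        rw [Real.norm_eq_abs] at this
        refine this.trans ?_
        have : |a (i + 1) - a i| = 1 / n := by
          rw [hstep i, abs_of_pos (by positivity)]
        rw [this]
      refine (Finset.sum_le_sum hterm).trans ?_
      rw [Finset.sum_const, Finset.card_range, nsmul_eq_mul]
      have : (n:ℝ) * (ε₁ * B' * (1 / n)) = ε₁ * B' := by field_simp <;> ring
      rw [this]
    -- bound 3
    have hb3 : |(∑ i ∈ Finset.range n, g (a i) * (L * (1 / n))) - I * L| ≤ ε₁ * |L| := by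
      rw [hsplitg, Finset.sum_mul, ← Finset.sum_sub_distrib]
      refine (Finset.abs_sum_le_sum_abs _ _).trans ?_
      have hterm : ∀ i ∈ Finset.range n,
          |g (a i) * (L * (1 / n)) - (∫ s in a i..a (i + 1), g s) * L|
            ≤ (ε₁ * (1 / n)) * |L| := by
        intro i hi
        rw [Finset.mem_range] at hi
        have hconst : g (a i) * (1 / n) = ∫ s in a i..a (i + 1), g (a i) := by
          rw [intervalIntegral.integral_const, smul_eq_mul, hstep i]
          ring
        have heq : g (a i) * (L * (1 / n)) - (∫ s in a i..a (i + 1), g s) * L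
            = (∫ s in a i..a (i + 1), (g (a i) - g s)) * L := by
          rw [intervalIntegral.integral_sub intervalIntegrable_const
            (hg.intervalIntegrable _ _), ← hconst]
          ring
        rw [heq, abs_mul]
        apply mul_le_mul_of_nonneg_right _ (abs_nonneg L)
        have hbd : ∀ x ∈ uIoc (a i) (a (i + 1)), ‖g (a i) - g x‖ ≤ ε₁ := by
          intro x hx
          rw [uIoc_of_le (hmono i)] at hx
          rw [Real.norm_eq_abs, abs_sub_comm]
          exact hclose i hi x ⟨hx.1.le, hx.2⟩
        have := intervalIntegral.norm_integral_le_of_norm_le_const hbd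
        rw [Real.norm_eq_abs] at this
        refine this.trans ?_
        rw [hstep i, abs_of_pos (by positivity)]
      refine (Finset.sum_le_sum hterm).trans ?_
      rw [Finset.sum_const, Finset.card_range, nsmul_eq_mul]
      have : (n:ℝ) * (ε₁ * (1 / n) * |L|) = ε₁ * |L| := by field_simp <;> ring
      rw [this]
    -- combine
    have hb2 := hN T (le_trans (le_max_left _ _) hT)
    rw [Real.dist_eq] at hb2
    have htri := abs_sub_le (∫ s in (0:ℝ)..1, g s * K (T * s))
      (∑ i ∈ Finset.range n, g (a i) * ∫ s in a i..a (i + 1), K (T * s)) (I * L)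
    have htri2 := abs_sub_le (∑ i ∈ Finset.range n, g (a i) * ∫ s in a i..a (i + 1), K (T * s))
      (∑ i ∈ Finset.range n, g (a i) * (L * (1 / n))) (I * L)
    have hkey : ε₁ * B' + ε₁ * |L| ≤ ε / 2 := by
      have h1 : ε₁ * B' + ε₁ * |L| = ε₁ * (B' + |L|) := by ring
      have h2 : ε₁ * (B' + |L|) ≤ ε₁ * (B' + |L| + 1) :=
        mul_le_mul_of_nonneg_left (by linarith) hε₁.le
      have hX : (B' + |L| + 1) ≠ 0 := by positivity
      have h3 : ε₁ * (B' + |L| + 1) = ε / 2 := by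
        rw [hε₁def]
        field_simp
      linarith
    have hfin := htri.trans (add_le_add hb1 (htri2.trans (add_le_add hb2.le hb3)))
    linarith
  apply main.congr'
  filter_upwards [eventually_gt_atTop 0] with T hT
  have h := intervalIntegral.integral_comp_mul_left
    (a := (0:ℝ)) (b := 1) (c := T) (f := fun t => g (t / T) * K t) hT.ne'
  simp only [mul_div_cancel_left₀ _ hT.ne', mul_zero, mul_one] at h
  rw [h, smul_eq_mul, one_div]

end WindowedAux

/-- Equation (15) ('final'): for `η`, `J` bounded, locally integrable, with ergodic
averages `⟨η⟩ = Lη`, `⟨J⟩ = LJ`, `w` continuously differentiable on `[0,1]` with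
`w 0 = w 1 = 0` and mean `w̄ = ∫₀¹ w`, and `tau : (0,∞) → ℝ` with `0 ≤ tau T ≤ T` and
`lim_{T→∞} tau T / T` existing, one has
`lim_{T→∞} (1/T)∫₀ᵀ w'(t/T)·(1/T)(∫_{tau T}^t η)·J(t) dt = −w̄·⟨η⟩·⟨J⟩`. -/
theorem windowed_dilation_average_eq_neg_mean_mul_averages
    (η J w w' : ℝ → ℝ) (tau : ℝ → ℝ) (Lη LJ sc : ℝ)
    (hηb : ∃ B : ℝ, ∀ t : ℝ, |η t| ≤ B)
    (hηloc : LocallyIntegrable η)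
    (hη : Tendsto (fun T : ℝ => (1 / T) * ∫ t in (0:ℝ)..T, η t) atTop (nhds Lη))
    (hJb : ∃ B : ℝ, ∀ t : ℝ, |J t| ≤ B)
    (hJloc : LocallyIntegrable J)
    (hJ : Tendsto (fun T : ℝ => (1 / T) * ∫ t in (0:ℝ)..T, J t) atTop (nhds LJ))
    (hw : ∀ s ∈ Icc (0:ℝ) 1, HasDerivWithinAt w (w' s) (Icc (0:ℝ) 1) s)
    (hw'c : ContinuousOn w' (Icc (0:ℝ) 1))
    (hw0 : w 0 = 0) (hw1 : w 1 = 0)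
    (htau0 : ∀ T : ℝ, 0 < T → 0 ≤ tau T ∧ tau T ≤ T)
    (htau : Tendsto (fun T : ℝ => tau T / T) atTop (nhds sc)) :
    Tendsto (fun T : ℝ =>
        (1 / T) * ∫ t in (0:ℝ)..T,
          w' (t / T) * ((1 / T) * ∫ τ in tau T..t, η τ) * J t)
      atTop (nhds (-(∫ s in (0:ℝ)..1, w s) * Lη * LJ)) := by
  classical
  obtain ⟨Bη, hBη⟩ := hηb
  obtain ⟨BJ, hBJ⟩ := hJb
  have hIcc : uIcc (0:ℝ) 1 = Icc 0 1 := uIcc_of_le zero_le_one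
  -- continuous extension of w' via clamping
  set c : ℝ → ℝ := fun x => min (max x 0) 1 with hcdef
  have hcmem : ∀ x, c x ∈ Icc (0:ℝ) 1 :=
    fun x => ⟨le_min (le_max_right x 0) zero_le_one, min_le_right _ _⟩
  have hccont : Continuous c := (continuous_id.max continuous_const).min continuous_const
  set g : ℝ → ℝ := fun x => w' (c x) with hgdef
  have hgc : Continuous g := hw'c.comp_continuous hccont hcmem
  have hg_eq : ∀ s ∈ Icc (0:ℝ) 1, g s = w' s := by
    intro s hs
    simp only [hgdef, hcdef]
    rw [max_eq_left hs.1, min_eq_left hs.2]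
  set g₁ : ℝ → ℝ := fun x => Lη * x * g x with hg₁def
  have hg₁c : Continuous g₁ := (continuous_const.mul continuous_id).mul hgc
  set F : ℝ → ℝ := fun t => ∫ τ in (0:ℝ)..t, η τ with hFdef
  have hFc : Continuous F :=
    intervalIntegral.continuous_primitive (fun a b => WindowedAux.locInt hηloc a b) 0
  have hwcont : ContinuousOn w (Icc 0 1) := fun x hx => (hw x hx).continuousWithinAt
  -- ∫₀¹ w' = 0
  have hIg : (∫ s in (0:ℝ)..1, g s) = 0 := by
    have h1 : (∫ s in (0:ℝ)..1, g s) = ∫ s in (0:ℝ)..1, w' s :=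
      intervalIntegral.integral_congr (by rw [hIcc]; exact hg_eq)
    have h2 : (∫ s in (0:ℝ)..1, w' s) = w 1 - w 0 := by
      apply intervalIntegral.integral_eq_sub_of_hasDeriv_right_of_le zero_le_one hwcont
      · intro x hx
        exact ((hw x (mem_Icc_of_Ioo hx)).hasDerivAt (Icc_mem_nhds hx.1 hx.2)).hasDerivWithinAt
      · exact (hIcc ▸ hw'c).intervalIntegrable
    rw [h1, h2, hw0, hw1, sub_zero]
  -- ∫₀¹ g₁ = -(∫₀¹ w) * Lη
  have hIg₁ : (∫ s in (0:ℝ)..1, g₁ s) = -(∫ s in (0:ℝ)..1, w s) * Lη := by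
    have h1 : (∫ s in (0:ℝ)..1, g₁ s) = ∫ s in (0:ℝ)..1, Lη * (s * w' s) := by
      apply intervalIntegral.integral_congr
      rw [hIcc]
      intro s hs
      simp only [hg₁def, hg_eq s hs]
      ring
    have h2 : (∫ s in (0:ℝ)..1, s * w' s) = -(∫ s in (0:ℝ)..1, w s) := by
      have h3 := intervalIntegral.integral_mul_deriv_eq_deriv_mul_of_hasDerivWithinAt
        (a := (0:ℝ)) (b := 1) (u := fun x => x) (u' := fun _ => (1:ℝ)) (v := w) (v' := w')
        (fun x _ => (hasDerivAt_id x).hasDerivWithinAt)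
        (by rw [hIcc]; exact hw)
        intervalIntegrable_const
        (hIcc ▸ hw'c).intervalIntegrable
      rw [hw0, hw1] at h3
      simpa using h3
    rw [h1, intervalIntegral.integral_const_mul, h2]
    ring
  -- two weak limits
  have hTg : Tendsto (fun T : ℝ => (1 / T) * ∫ t in (0:ℝ)..T, g (t / T) * J t)
      atTop (nhds 0) := by
    have := WindowedAux.weak hBJ hJloc hJ hgc
    rwa [hIg, zero_mul] at this
  have hTg₁ : Tendsto (fun T : ℝ => (1 / T) * ∫ t in (0:ℝ)..T, g₁ (t / T) * J t)
      atTop (nhds (-(∫ s in (0:ℝ)..1, w s) * Lη * LJ)) := by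
    have := WindowedAux.weak hBJ hJloc hJ hg₁c
    rwa [hIg₁] at this
  -- limit of F(tau T)/T
  have hTtau : Tendsto (fun T : ℝ => F (tau T) / T) atTop (nhds (Lη * sc)) := by
    have h1 : Tendsto (fun T : ℝ => (F (tau T) - Lη * tau T) / T) atTop (nhds 0) := by
      apply WindowedAux.tendsto_of_eps
      intro ε hε
      filter_upwards [WindowedAux.sublinear hBη hη hε, eventually_ge_atTop 1] with T hsub hT1
      have hT0 : (0:ℝ) < T := lt_of_lt_of_le one_pos hT1
      have htm := htau0 T hT0
      have h2 := hsub (tau T) ⟨htm.1, htm.2⟩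
      rw [sub_zero, abs_div, abs_of_pos hT0, div_le_iff₀ hT0]
      rw [mul_comm ε T] at h2
      rw [mul_comm ε T]
      exact h2
    have h2 : Tendsto (fun T : ℝ => Lη * (tau T / T)) atTop (nhds (Lη * sc)) :=
      htau.const_mul Lη
    have h3 := h1.add h2
    rw [zero_add] at h3
    apply h3.congr'
    filter_upwards [eventually_gt_atTop 0] with T hT
    field_simp
    ring
  -- bound for g
  obtain ⟨Mg, hMg⟩ : ∃ M : ℝ, ∀ x, |g x| ≤ M := by
    obtain ⟨C, hC⟩ := isCompact_Icc.exists_bound_of_continuousOn hw'c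
    exact ⟨C, fun x => by simpa [hgdef, Real.norm_eq_abs] using hC (c x) (hcmem x)⟩
  set Mg' : ℝ := |Mg| + 1 with hMg'def
  have hMg'0 : (0:ℝ) < Mg' := by positivity
  have hMg' : ∀ x, |g x| ≤ Mg' := fun x =>
    (hMg x).trans (by rw [hMg'def]; linarith [le_abs_self Mg])
  set BJ' : ℝ := |BJ| + 1 with hBJ'def
  have hBJ'0 : (0:ℝ) < BJ' := by positivity
  have hBJ' : ∀ x, |J x| ≤ BJ' := fun x =>
    (hBJ x).trans (by rw [hBJ'def]; linarith [le_abs_self BJ])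
  -- middle term tends to zero
  have hT2 : Tendsto (fun T : ℝ =>
      (1 / T) * ∫ t in (0:ℝ)..T, g (t / T) * ((F t - Lη * t) / T) * J t)
      atTop (nhds 0) := by
    apply WindowedAux.tendsto_of_eps
    intro ε hε
    have hden : (0:ℝ) < Mg' * BJ' + 1 := by positivity
    set ε' : ℝ := ε / (Mg' * BJ' + 1) with hε'def
    have hε'0 : (0:ℝ) < ε' := by positivity
    filter_upwards [WindowedAux.sublinear hBη hη hε'0, eventually_ge_atTop 1] with T hsub hT1
    have hT0 : (0:ℝ) < T := lt_of_lt_of_le one_pos hT1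
    have hbd : ∀ x ∈ uIoc (0:ℝ) T,
        ‖g (x / T) * ((F x - Lη * x) / T) * J x‖ ≤ Mg' * ε' * BJ' := by
      intro x hx
      rw [uIoc_of_le hT0.le] at hx
      have hxI : x ∈ Icc (0:ℝ) T := ⟨hx.1.le, hx.2⟩
      have h1 : |(F x - Lη * x) / T| ≤ ε' := by
        rw [abs_div, abs_of_pos hT0, div_le_iff₀ hT0, mul_comm ε' T]
        have := hsub x hxI
        rwa [mul_comm ε' T] at this
      rw [Real.norm_eq_abs, abs_mul, abs_mul]
      exact mul_le_mul (mul_le_mul (hMg' _) h1 (abs_nonneg _) hMg'0.le)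
        (hBJ' x) (abs_nonneg _) (by positivity)
    have hInt := intervalIntegral.norm_integral_le_of_norm_le_const hbd
    rw [Real.norm_eq_abs, sub_zero, abs_of_pos hT0] at hInt
    rw [sub_zero, abs_mul, abs_of_pos (by positivity : (0:ℝ) < 1 / T)]
    have h4 : (1 / T) * |∫ t in (0:ℝ)..T, g (t / T) * ((F t - Lη * t) / T) * J t|
        ≤ (1 / T) * (Mg' * ε' * BJ' * T) :=
      mul_le_mul_of_nonneg_left hInt (by positivity)
    refine h4.trans ?_
    have h5 : (1 / T) * (Mg' * ε' * BJ' * T) = Mg' * BJ' * ε' := by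
      field_simp
    rw [h5]
    have h6 : Mg' * BJ' * ε' ≤ (Mg' * BJ' + 1) * ε' :=
      mul_le_mul_of_nonneg_right (by linarith) hε'0.le
    have h7 : (Mg' * BJ' + 1) * ε' = ε := by
      rw [hε'def]
      field_simp
    linarith
  -- decomposition of the integrand
  have hdecomp : (fun T : ℝ =>
        ((1 / T) * ∫ t in (0:ℝ)..T, g₁ (t / T) * J t)
        + ((1 / T) * ∫ t in (0:ℝ)..T, g (t / T) * ((F t - Lη * t) / T) * J t)
        - F (tau T) / T * ((1 / T) * ∫ t in (0:ℝ)..T, g (t / T) * J t))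
      =ᶠ[atTop] (fun T : ℝ =>
        (1 / T) * ∫ t in (0:ℝ)..T,
          w' (t / T) * ((1 / T) * ∫ τ in tau T..t, η τ) * J t) := by
    filter_upwards [eventually_gt_atTop 0] with T hT0
    have hcongr : EqOn
        (fun t => w' (t / T) * ((1 / T) * ∫ τ in tau T..t, η τ) * J t)
        (fun t => g₁ (t / T) * J t + g (t / T) * ((F t - Lη * t) / T) * J t
          - F (tau T) / T * (g (t / T) * J t)) (uIcc 0 T) := by
      intro t ht
      rw [uIcc_of_le hT0.le] at ht
      have htT : t / T ∈ Icc (0:ℝ) 1 :=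
        ⟨div_nonneg ht.1 hT0.le, (div_le_one hT0).2 ht.2⟩
      have h1 : w' (t / T) = g (t / T) := (hg_eq _ htT).symm
      have h2 : (∫ τ in tau T..t, η τ) = F t - F (tau T) :=
        (intervalIntegral.integral_interval_sub_left
          (WindowedAux.locInt hηloc 0 t) (WindowedAux.locInt hηloc 0 (tau T))).symm
      simp only [h1, h2, hg₁def]
      field_simp
      ring
    rw [intervalIntegral.integral_congr hcongr]
    have hcd : Continuous fun t : ℝ => t / T := continuous_id.div_const T
    have hi1 : IntervalIntegrable (fun t => g₁ (t / T) * J t) volume 0 T :=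
      (WindowedAux.locInt hJloc 0 T).continuousOn_mul (hg₁c.comp hcd).continuousOn
    have hi2 : IntervalIntegrable
        (fun t => g (t / T) * ((F t - Lη * t) / T) * J t) volume 0 T :=
      (WindowedAux.locInt hJloc 0 T).continuousOn_mul
        (((hgc.comp hcd).mul
          ((hFc.sub (continuous_const.mul continuous_id)).div_const T)).continuousOn)
    have hi3 : IntervalIntegrable (fun t => g (t / T) * J t) volume 0 T :=
      (WindowedAux.locInt hJloc 0 T).continuousOn_mul (hgc.comp hcd).continuousOn
    rw [intervalIntegral.integral_sub (hi1.add hi2) (hi3.const_mul _),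
      intervalIntegral.integral_add hi1 hi2, intervalIntegral.integral_const_mul]
    ring
  have hfinal := (hTg₁.add hT2).sub (hTtau.mul hTg)
  rw [add_zero, mul_zero, sub_zero] at hfinal
  exact hfinal.congr' hdecomp
end

section
/- Let η : ℝ → ℝ be continuous and bounded with ergodic average ⟨η⟩ existing, and let J : ℝ → ℝ be bounded and continuously differentiable such that the ergodic averages ⟨J⟩ and ⟨η·J⟩ exist. Let w : [0,1] → ℝ be continuously differentiable with w(0) = w(1) = 0 and mean w̄ = ∫₀¹ w(s) ds, and let τ̌ : (0,∞) → ℝ satisfy 0 ≤ τ̌(T) ≤ T for all T and lim_{T→∞} τ̌(T)/T exists. Then lim_{T→∞} −(1/T)∫₀ᵀ w(t/T) · (∫_{τ̌(T)}^{t} η(τ) dτ) · J'(t) dt = w̄·⟨η·J⟩ − w̄·⟨η⟩·⟨J⟩. -/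
open MeasureTheory Filter Set intervalIntegral

section helpers

lemma primitive_hasDerivAt {f : ℝ → ℝ} (hf : Continuous f) (a t : ℝ) :
    HasDerivAt (fun u => ∫ τ in a..u, f τ) (f t) t :=
  integral_hasDerivAt_right (hf.intervalIntegrable _ _)
    (hf.stronglyMeasurable.stronglyMeasurableAtFilter) hf.continuousAt

lemma primitive_continuous {f : ℝ → ℝ} (hf : Continuous f) (a : ℝ) :
    Continuous (fun u => ∫ τ in a..u, f τ) := by
  have : Differentiable ℝ (fun u => ∫ τ in a..u, f τ) :=
    fun t => (primitive_hasDerivAt hf a t).differentiableAt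
  exact this.continuous

lemma subst_lemma (G H : ℝ → ℝ) (T : ℝ) (hT : 0 < T) :
    (1/T) * ∫ t in (0:ℝ)..T, G (t/T) * H t = ∫ s in (0:ℝ)..1, G s * H (T*s) := by
  have h := integral_comp_mul_left (fun x => G (x/T) * H x) (a := 0) (b := 1) (c := T) hT.ne'
  simp only [mul_zero, mul_one] at h
  have : ∀ s : ℝ, G ((T*s)/T) * H (T*s) = G s * H (T*s) := by
    intro s; rw [mul_div_cancel_left₀ _ hT.ne']
  rw [intervalIntegral.integral_congr (g := fun s => G ((T*s)/T) * H (T*s)) (fun s _ => (this s).symm)]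
  rw [h, smul_eq_mul, one_div]


lemma lemU {f : ℝ → ℝ} {B L : ℝ} (hB : ∀ t, |f t| ≤ B)
    (hL : Tendsto (fun T : ℝ => (1 / T) * ∫ t in (0:ℝ)..T, f t) atTop (nhds L))
    {ε : ℝ} (hε : 0 < ε) :
    ∀ᶠ T in atTop, ∀ s ∈ Icc (0:ℝ) 1, |(∫ t in (0:ℝ)..(T*s), f t)/T - s*L| ≤ ε := by
  have hB0 : 0 ≤ B := (abs_nonneg _).trans (hB 0)
  set M : ℝ := B + |L| + 1 with hM
  have hM0 : 0 < M := by positivity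
  set δ : ℝ := ε / M with hδ
  have hδ0 : 0 < δ := by positivity
  obtain ⟨N, hN⟩ := (Metric.tendsto_atTop.mp hL) ε hε
  have hNev : ∀ᶠ T in atTop, T ≥ max (N / δ) 1 := eventually_ge_atTop _
  filter_upwards [hNev] with T hT s hs
  obtain ⟨hs0, hs1⟩ := hs
  have hT1 : (1:ℝ) ≤ T := le_trans (le_max_right _ _) hT
  have hT0 : 0 < T := lt_of_lt_of_le one_pos hT1
  rcases le_or_gt s δ with hcase | hcase
  · -- small s : |∫₀^{Ts} f| ≤ B * (T*s)
    have hbound : |∫ t in (0:ℝ)..(T*s), f t| ≤ B * |T*s - 0| := by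
      have := intervalIntegral.norm_integral_le_of_norm_le_const
        (a := (0:ℝ)) (b := T*s) (C := B) (f := f) (fun x _ => hB x)
      simpa [Real.norm_eq_abs] using this
    have h1 : |(∫ t in (0:ℝ)..(T*s), f t)/T - s*L| ≤ s*B + s*|L| := by
      have : |(∫ t in (0:ℝ)..(T*s), f t)/T| ≤ s * B := by
        rw [abs_div, abs_of_pos hT0]
        rw [sub_zero, abs_of_nonneg (by positivity : (0:ℝ) ≤ T*s)] at hbound
        rw [div_le_iff₀ hT0]
        calc |∫ t in (0:ℝ)..(T*s), f t| ≤ B * (T*s) := hbound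
          _ = s * B * T := by ring
      calc |(∫ t in (0:ℝ)..(T*s), f t)/T - s*L| ≤ |(∫ t in (0:ℝ)..(T*s), f t)/T| + |s*L| :=
            abs_sub _ _
        _ ≤ s*B + s*|L| := by
            refine add_le_add this ?_
            rw [abs_mul, abs_of_nonneg hs0]
    refine h1.trans ?_
    calc s*B + s*|L| ≤ δ*B + δ*|L| := by
          refine add_le_add (mul_le_mul_of_nonneg_right hcase hB0)
            (mul_le_mul_of_nonneg_right hcase (abs_nonneg _))
      _ ≤ δ * M := by rw [hM]; nlinarith
      _ = ε * (M/M) := by rw [hδ]; ring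
      _ = ε := by rw [div_self hM0.ne']; ring
  · -- large s : T*s ≥ N
    have hs0' : 0 < s := lt_trans hδ0 hcase
    have hTs : T*s ≥ N := by
      have h1 : N/δ ≤ T := le_trans (le_max_left _ _) hT
      have h2 : N ≤ T * δ := by
        rcases le_or_gt N 0 with h | h
        · nlinarith
        · rw [div_le_iff₀ hδ0] at h1; linarith
      nlinarith
    have := hN (T*s) hTs
    rw [Real.dist_eq] at this
    have key : (∫ t in (0:ℝ)..(T*s), f t)/T - s*L
        = s * ((1/(T*s)) * (∫ t in (0:ℝ)..(T*s), f t) - L) := by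
      field_simp
    rw [key, abs_mul, abs_of_nonneg hs0]
    calc s * |(1/(T*s)) * (∫ t in (0:ℝ)..(T*s), f t) - L| ≤ 1 * ε := by
          apply mul_le_mul hs1 (le_of_lt this) (abs_nonneg _) zero_le_one
      _ = ε := one_mul ε


lemma lemW1 {f v v' : ℝ → ℝ} {B L : ℝ} (hf : Continuous f) (hB : ∀ t, |f t| ≤ B)
    (hL : Tendsto (fun T : ℝ => (1 / T) * ∫ t in (0:ℝ)..T, f t) atTop (nhds L))
    (hv : ∀ s, HasDerivAt v (v' s) s) (hv'c : Continuous v') :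
    Tendsto (fun T : ℝ => (1 / T) * ∫ t in (0:ℝ)..T, v (t/T) * f t) atTop
      (nhds ((∫ s in (0:ℝ)..1, v s) * L)) := by
  set A : ℝ → ℝ := fun u => ∫ t in (0:ℝ)..u, f t with hA
  have hAc : Continuous A := primitive_continuous hf 0
  have hvc : Continuous v :=
    (Differentiable.continuous (fun s => (hv s).differentiableAt))
  -- identity for T > 0
  have hid : ∀ T : ℝ, 0 < T →
      (1 / T) * ∫ t in (0:ℝ)..T, v (t/T) * f t
        = v 1 * ((1/T) * A T) - ∫ s in (0:ℝ)..1, v' s * (A (T*s) / T) := by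
    intro T hT
    have hTne : T ≠ 0 := hT.ne'
    -- chain rule derivative of g t = v (t/T) * A t
    have hgd : ∀ t : ℝ, HasDerivAt (fun t => v (t/T) * A t)
        (v' (t/T) * (1/T) * A t + v (t/T) * f t) t := by
      intro t
      have h1 : HasDerivAt (fun t : ℝ => v (t/T)) (v' (t/T) * (1/T)) t := by
        have := (hv (t/T)).comp t ((hasDerivAt_id t).div_const T)
        simpa [one_div, Function.comp_def] using this
      exact h1.mul (primitive_hasDerivAt hf 0 t)
    have hcont1 : Continuous (fun t : ℝ => v' (t/T) * (1/T) * A t + v (t/T) * f t) := by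
      fun_prop
    have hftc : ∫ t in (0:ℝ)..T, (v' (t/T) * (1/T) * A t + v (t/T) * f t)
        = v 1 * A T := by
      rw [integral_eq_sub_of_hasDerivAt (fun t _ => hgd t)
        (hcont1.intervalIntegrable _ _)]
      simp [hA, div_self hTne]
    have hint1 : IntervalIntegrable (fun t : ℝ => v' (t/T) * (1/T) * A t) volume 0 T :=
      (by fun_prop : Continuous fun t : ℝ => v' (t/T) * (1/T) * A t).intervalIntegrable _ _
    have hint2 : IntervalIntegrable (fun t : ℝ => v (t/T) * f t) volume 0 T :=
      (by fun_prop : Continuous fun t : ℝ => v (t/T) * f t).intervalIntegrable _ _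
    rw [integral_add hint1 hint2] at hftc
    have hsub : (1/T) * ∫ t in (0:ℝ)..T, v' (t/T) * ((A t)/T)
        = ∫ s in (0:ℝ)..1, v' s * (A (T*s) / T) :=
      subst_lemma v' (fun t => A t / T) T hT
    have hre : ∫ t in (0:ℝ)..T, v' (t/T) * (1/T) * A t
        = ∫ t in (0:ℝ)..T, v' (t/T) * ((A t)/T) := by
      apply intervalIntegral.integral_congr
      intro x _; ring
    have : ∫ t in (0:ℝ)..T, v (t/T) * f t
        = v 1 * A T - ∫ t in (0:ℝ)..T, v' (t/T) * (1/T) * A t := by linarith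
    rw [this, mul_sub, hre, hsub, mul_comm (1/T) (v 1 * A T)]
    ring_nf
  -- limits
  have hlim2 : Tendsto (fun T : ℝ => ∫ s in (0:ℝ)..1, v' s * (A (T*s) / T)) atTop
      (nhds (∫ s in (0:ℝ)..1, v' s * (s * L))) := by
    obtain ⟨C, hC⟩ := isCompact_Icc.exists_bound_of_continuousOn
      (hv'c.continuousOn (s := Icc (0:ℝ) 1))
    have hC0 : 0 ≤ C := (norm_nonneg _).trans (hC 0 (by norm_num))
    rw [Metric.tendsto_nhds]
    intro ε hε
    have hε' : 0 < ε / (2*(C+1)) := by positivity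
    filter_upwards [lemU hB hL hε'] with T hT
    have hint1 : IntervalIntegrable (fun s : ℝ => v' s * (A (T*s) / T)) volume 0 1 :=
      (by fun_prop : Continuous fun s : ℝ => v' s * (A (T*s) / T)).intervalIntegrable _ _
    have hint2 : IntervalIntegrable (fun s : ℝ => v' s * (s * L)) volume 0 1 :=
      (by fun_prop : Continuous fun s : ℝ => v' s * (s * L)).intervalIntegrable _ _
    rw [Real.dist_eq, ← intervalIntegral.integral_sub hint1 hint2]
    have hbd : ∀ x ∈ Set.uIoc (0:ℝ) 1,
        ‖v' x * (A (T*x) / T) - v' x * (x * L)‖ ≤ C * (ε / (2*(C+1))) := by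
      intro x hx
      have hx' : x ∈ Icc (0:ℝ) 1 := by
        rw [Set.uIoc_of_le (by norm_num : (0:ℝ) ≤ 1)] at hx
        exact ⟨le_of_lt hx.1, hx.2⟩
      have : v' x * (A (T*x) / T) - v' x * (x * L) = v' x * ((A (T*x) / T) - x * L) := by ring
      rw [this, Real.norm_eq_abs, abs_mul]
      exact mul_le_mul (by simpa [Real.norm_eq_abs] using hC x hx') (hT x hx')
        (abs_nonneg _) hC0
    have := intervalIntegral.norm_integral_le_of_norm_le_const hbd
    rw [Real.norm_eq_abs] at this
    calc |∫ s in (0:ℝ)..1, (v' s * (A (T*s) / T) - v' s * (s * L))|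
        ≤ C * (ε / (2*(C+1))) * |1 - 0| := this
      _ = ε * (C / (2*(C+1))) := by
            rw [abs_of_nonneg (by norm_num : (0:ℝ) ≤ 1 - 0)]; ring
      _ < ε * 1 := by
            apply mul_lt_mul_of_pos_left _ hε
            rw [div_lt_one (by positivity)]; linarith
      _ = ε := mul_one ε
  have hkey : (∫ s in (0:ℝ)..1, v' s * (s * L)) = (v 1 - ∫ s in (0:ℝ)..1, v s) * L := by
    have hd : ∀ s : ℝ, HasDerivAt (fun s : ℝ => s * v s) (v s + s * v' s) s := by
      intro s
      have := (hasDerivAt_id s).mul (hv s)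
      simpa [add_comm, Pi.mul_def] using this
    have hcont : Continuous (fun s : ℝ => v s + s * v' s) := by fun_prop
    have hftc : ∫ s in (0:ℝ)..1, (v s + s * v' s) = v 1 := by
      rw [integral_eq_sub_of_hasDerivAt (fun s _ => hd s) (hcont.intervalIntegrable _ _)]
      ring
    have hi1 : IntervalIntegrable v volume 0 1 := hvc.intervalIntegrable _ _
    have hi2 : IntervalIntegrable (fun s : ℝ => s * v' s) volume 0 1 :=
      (by fun_prop : Continuous fun s : ℝ => s * v' s).intervalIntegrable _ _
    rw [integral_add hi1 hi2] at hftc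
    have : (∫ s in (0:ℝ)..1, v' s * (s * L)) = (∫ s in (0:ℝ)..1, s * v' s) * L := by
      rw [← intervalIntegral.integral_mul_const]
      apply intervalIntegral.integral_congr
      intro x _; ring
    rw [this]
    have : (∫ s in (0:ℝ)..1, s * v' s) = v 1 - ∫ s in (0:ℝ)..1, v s := by linarith
    rw [this]
  have hfinal : Tendsto (fun T : ℝ => v 1 * ((1/T) * A T) - ∫ s in (0:ℝ)..1, v' s * (A (T*s) / T))
      atTop (nhds ((∫ s in (0:ℝ)..1, v s) * L)) := by
    have h1 : Tendsto (fun T : ℝ => v 1 * ((1/T) * A T)) atTop (nhds (v 1 * L)) :=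
      hL.const_mul _
    have := h1.sub hlim2
    rw [hkey] at this
    convert this using 2
    ring
  apply hfinal.congr'
  filter_upwards [eventually_gt_atTop (0:ℝ)] with T hT
  exact (hid T hT).symm


lemma lemW {f v : ℝ → ℝ} {B L : ℝ} (hf : Continuous f) (hB : ∀ t, |f t| ≤ B)
    (hL : Tendsto (fun T : ℝ => (1 / T) * ∫ t in (0:ℝ)..T, f t) atTop (nhds L))
    (hv : ContinuousOn v (Icc (0:ℝ) 1)) :
    Tendsto (fun T : ℝ => (1 / T) * ∫ t in (0:ℝ)..T, v (t/T) * f t) atTop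
      (nhds ((∫ s in (0:ℝ)..1, v s) * L)) := by
  have hB0 : 0 ≤ B := (abs_nonneg _).trans (hB 0)
  rw [Metric.tendsto_nhds]
  intro ε hε
  set δ : ℝ := ε / (4 * (B + |L| + 1)) with hδdef
  have hδ : 0 < δ := by positivity
  obtain ⟨p, hp⟩ := exists_polynomial_near_of_continuousOn 0 1 v hv δ hδ
  set q : ℝ → ℝ := fun x => p.eval x with hq
  have hqd : ∀ s : ℝ, HasDerivAt q (p.derivative.eval s) s := fun s => p.hasDerivAt s
  have hqc : Continuous q := p.continuous
  have hq'c : Continuous (fun s : ℝ => p.derivative.eval s) := p.derivative.continuous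
  have hPlim := lemW1 hf hB hL hqd hq'c
  rw [Metric.tendsto_nhds] at hPlim
  filter_upwards [hPlim (ε/2) (by positivity), eventually_gt_atTop (0:ℝ)] with T hPT hT0
  rw [Real.dist_eq]
  rw [Real.dist_eq] at hPT
  -- integrability facts
  have hmaps : MapsTo (fun t : ℝ => t / T) (Icc 0 T) (Icc (0:ℝ) 1) := by
    intro t ht
    constructor
    · exact div_nonneg ht.1 hT0.le
    · rw [div_le_one hT0]; exact ht.2
  have hvT : ContinuousOn (fun t : ℝ => v (t / T)) (Icc 0 T) :=
    hv.comp (continuousOn_id.div_const T) hmaps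
  have hint1 : IntervalIntegrable (fun t : ℝ => v (t/T) * f t) volume 0 T := by
    apply ContinuousOn.intervalIntegrable
    rw [uIcc_of_le hT0.le]
    exact hvT.mul hf.continuousOn
  have hint2 : IntervalIntegrable (fun t : ℝ => q (t/T) * f t) volume 0 T :=
    (hqc.comp (continuous_id.div_const T)).mul hf |>.intervalIntegrable _ _
  -- step 1 : |X_T - P_T| ≤ δ * B
  have step1 : |(1/T) * (∫ t in (0:ℝ)..T, v (t/T) * f t) -
      (1/T) * (∫ t in (0:ℝ)..T, q (t/T) * f t)| ≤ δ * B := by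
    rw [← mul_sub, ← intervalIntegral.integral_sub hint1 hint2, abs_mul]
    have hbd : ∀ x ∈ Set.uIoc (0:ℝ) T, ‖v (x/T) * f x - q (x/T) * f x‖ ≤ δ * B := by
      intro x hx
      have hx' : x/T ∈ Icc (0:ℝ) 1 := by
        rw [Set.uIoc_of_le hT0.le] at hx
        exact hmaps ⟨hx.1.le, hx.2⟩
      have : v (x/T) * f x - q (x/T) * f x = (v (x/T) - q (x/T)) * f x := by ring
      rw [this, Real.norm_eq_abs, abs_mul]
      have h1 : |v (x/T) - q (x/T)| ≤ δ := by
        rw [abs_sub_comm]; exact (hp _ hx').le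
      exact mul_le_mul h1 (hB x) (abs_nonneg _) hδ.le
    have := intervalIntegral.norm_integral_le_of_norm_le_const hbd
    rw [Real.norm_eq_abs] at this
    calc |1/T| * |∫ t in (0:ℝ)..T, (v (t/T) * f t - q (t/T) * f t)|
        ≤ |1/T| * (δ * B * |T - 0|) := by
          exact mul_le_mul_of_nonneg_left this (abs_nonneg _)
      _ = δ * B := by
          rw [abs_of_pos (by positivity : (0:ℝ) < 1/T), abs_of_pos (by simpa using hT0)]
          field_simp; ring
  -- step 3 : |(∫ q) * L - (∫ v) * L| ≤ δ * |L|
  have step3 : |(∫ s in (0:ℝ)..1, q s) * L - (∫ s in (0:ℝ)..1, v s) * L| ≤ δ * |L| := by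
    have hiq : IntervalIntegrable q volume 0 1 := hqc.intervalIntegrable _ _
    have hiv : IntervalIntegrable v volume 0 1 := by
      apply ContinuousOn.intervalIntegrable
      rwa [uIcc_of_le (by norm_num : (0:ℝ) ≤ 1)]
    rw [← sub_mul, abs_mul, ← intervalIntegral.integral_sub hiq hiv]
    have hbd : ∀ x ∈ Set.uIoc (0:ℝ) 1, ‖q x - v x‖ ≤ δ := by
      intro x hx
      rw [Set.uIoc_of_le (by norm_num : (0:ℝ) ≤ 1)] at hx
      exact (hp x ⟨hx.1.le, hx.2⟩).le
    have := intervalIntegral.norm_integral_le_of_norm_le_const hbd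
    rw [Real.norm_eq_abs] at this
    have h2 : |∫ s in (0:ℝ)..1, (q s - v s)| ≤ δ := by simpa using this
    exact mul_le_mul_of_nonneg_right h2 (abs_nonneg _)
  -- combine
  have htri : |(1/T) * (∫ t in (0:ℝ)..T, v (t/T) * f t) - (∫ s in (0:ℝ)..1, v s) * L|
      ≤ δ * B + |(1/T) * (∫ t in (0:ℝ)..T, q (t/T) * f t) - (∫ s in (0:ℝ)..1, q s) * L|
        + δ * |L| := by
    calc |(1/T) * (∫ t in (0:ℝ)..T, v (t/T) * f t) - (∫ s in (0:ℝ)..1, v s) * L|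
        ≤ |(1/T) * (∫ t in (0:ℝ)..T, v (t/T) * f t) -
            (1/T) * (∫ t in (0:ℝ)..T, q (t/T) * f t)|
          + |(1/T) * (∫ t in (0:ℝ)..T, q (t/T) * f t) - (∫ s in (0:ℝ)..1, q s) * L|
          + |(∫ s in (0:ℝ)..1, q s) * L - (∫ s in (0:ℝ)..1, v s) * L| := by
            apply (abs_sub_le _ ((∫ s in (0:ℝ)..1, q s) * L) _).trans
            apply add_le_add_left
            exact abs_sub_le _ _ _
      _ ≤ _ := by
            refine add_le_add (add_le_add_left step1 _) step3
  have hδsmall : δ * B + δ * |L| ≤ ε / 2 := by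
    have hM : (0:ℝ) < B + |L| + 1 := by positivity
    have h1 : δ * (B + |L|) ≤ δ * (2 * (B + |L| + 1)) := by
      apply mul_le_mul_of_nonneg_left _ hδ.le
      nlinarith [abs_nonneg L]
    have h2 : δ * (2 * (B + |L| + 1)) = ε / 2 := by
      rw [hδdef]; field_simp; ring
    nlinarith
  linarith [htri, hPT]


lemma lemU2 {η : ℝ → ℝ} {Bη Lη sc : ℝ} {tau : ℝ → ℝ}
    (hηB : ∀ t, |η t| ≤ Bη)
    (hη : Tendsto (fun T : ℝ => (1 / T) * ∫ t in (0:ℝ)..T, η t) atTop (nhds Lη))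
    (htau0 : ∀ T : ℝ, 0 < T → 0 ≤ tau T ∧ tau T ≤ T)
    (htau : Tendsto (fun T : ℝ => tau T / T) atTop (nhds sc)) :
    Tendsto (fun T : ℝ => (∫ t in (0:ℝ)..(tau T), η t)/T) atTop (nhds (sc * Lη)) := by
  rw [Metric.tendsto_nhds]
  intro ε hε
  have hε2 : 0 < ε/2 := by positivity
  have hε3 : 0 < ε/(2*(|Lη|+1)) := by positivity
  have htc := (Metric.tendsto_nhds.mp htau) _ hε3
  filter_upwards [lemU hηB hη hε2, htc, eventually_gt_atTop (0:ℝ)] with T hU htcT hT0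
  obtain ⟨ht1, ht2⟩ := htau0 T hT0
  set s₀ : ℝ := tau T / T with hs₀
  have hs₀mem : s₀ ∈ Icc (0:ℝ) 1 := by
    constructor
    · exact div_nonneg ht1 hT0.le
    · rw [div_le_one hT0]; exact ht2
  have hTs₀ : T * s₀ = tau T := by
    rw [hs₀]; field_simp
  have h1 := hU s₀ hs₀mem
  rw [hTs₀] at h1
  rw [Real.dist_eq] at htcT ⊢
  have h2 : |s₀ * Lη - sc * Lη| < ε/2 := by
    have : |s₀ * Lη - sc * Lη| = |s₀ - sc| * |Lη| := by rw [← abs_mul]; ring_nf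
    rw [this]
    calc |s₀ - sc| * |Lη| ≤ |s₀ - sc| * (|Lη|+1) :=
          mul_le_mul_of_nonneg_left (by linarith) (abs_nonneg _)
      _ < (ε/(2*(|Lη|+1))) * (|Lη|+1) := by
          apply mul_lt_mul_of_pos_right htcT (by positivity)
      _ = ε/2 := by field_simp
  calc |(∫ t in (0:ℝ)..(tau T), η t)/T - sc * Lη|
      ≤ |(∫ t in (0:ℝ)..(tau T), η t)/T - s₀ * Lη| + |s₀ * Lη - sc * Lη| := abs_sub_le _ _ _
    _ < ε/2 + ε/2 := add_lt_add_of_le_of_lt h1 h2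
    _ = ε := by ring

lemma lemV2 {w w' : ℝ → ℝ} {sc : ℝ}
    (hw : ∀ s ∈ Icc (0:ℝ) 1, HasDerivWithinAt w (w' s) (Icc (0:ℝ) 1) s)
    (hw'c : ContinuousOn w' (Icc (0:ℝ) 1))
    (hw0 : w 0 = 0) (hw1 : w 1 = 0) :
    ∫ s in (0:ℝ)..1, w' s * (s - sc) = -∫ s in (0:ℝ)..1, w s := by
  have hwc : ContinuousOn w (Icc (0:ℝ) 1) := fun s hs => (hw s hs).continuousWithinAt
  have h01 : (0:ℝ) ≤ 1 := by norm_num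
  have hderivAt : ∀ x ∈ Ioo (0:ℝ) 1, HasDerivAt w (w' x) x := by
    intro x hx
    exact (hw x (Ioo_subset_Icc_self hx)).hasDerivAt (Icc_mem_nhds hx.1 hx.2)
  have hi_w : IntervalIntegrable w volume 0 1 := by
    apply ContinuousOn.intervalIntegrable; rwa [uIcc_of_le h01]
  have hi_w' : IntervalIntegrable w' volume 0 1 := by
    apply ContinuousOn.intervalIntegrable; rwa [uIcc_of_le h01]
  have hi_sw' : IntervalIntegrable (fun s : ℝ => s * w' s) volume 0 1 := by
    apply ContinuousOn.intervalIntegrable; rw [uIcc_of_le h01]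
    exact continuous_id.continuousOn.mul hw'c
  have hItot : ∫ s in (0:ℝ)..1, w' s = 0 := by
    rw [integral_eq_sub_of_hasDeriv_right_of_le h01 hwc
      (fun x hx => (hderivAt x hx).hasDerivWithinAt) hi_w']
    rw [hw0, hw1]; ring
  have hiadd : IntervalIntegrable (fun s : ℝ => w s + s * w' s) volume 0 1 :=
    hi_w.add hi_sw'
  have hItot2 : ∫ s in (0:ℝ)..1, (w s + s * w' s) = 0 := by
    rw [integral_eq_sub_of_hasDeriv_right_of_le h01
      (continuous_id.continuousOn.mul hwc)
      (f' := fun s => w s + s * w' s)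
      (fun x hx => by
        have := (hasDerivAt_id x).mul (hderivAt x hx)
        simpa [add_comm] using this.hasDerivWithinAt) hiadd]
    rw [Pi.mul_apply, Pi.mul_apply, hw0, hw1]; ring
  rw [integral_add hi_w hi_sw'] at hItot2
  have h1 : ∫ s in (0:ℝ)..1, w' s * (s - sc)
      = (∫ s in (0:ℝ)..1, s * w' s) - sc * ∫ s in (0:ℝ)..1, w' s := by
    rw [← intervalIntegral.integral_const_mul, ← intervalIntegral.integral_sub hi_sw'
      ((hi_w'.const_mul sc))]
    apply intervalIntegral.integral_congr
    intro x _; ring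
  rw [h1, hItot]
  linarith


lemma lemIBP {η J J' w w' : ℝ → ℝ} {a : ℝ} (T : ℝ) (hT : 0 < T)
    (hηc : Continuous η) (hJd : ∀ t : ℝ, HasDerivAt J (J' t) t) (hJ'c : Continuous J')
    (hw : ∀ s ∈ Icc (0:ℝ) 1, HasDerivWithinAt w (w' s) (Icc (0:ℝ) 1) s)
    (hw'c : ContinuousOn w' (Icc (0:ℝ) 1)) (hw0 : w 0 = 0) (hw1 : w 1 = 0) :
    -((1/T) * ∫ t in (0:ℝ)..T, w (t/T) * (∫ τ in a..t, η τ) * J' t)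
      = (1/T) * (∫ t in (0:ℝ)..T, w' (t/T) * (1/T) * ((∫ τ in a..t, η τ) * J t))
        + (1/T) * (∫ t in (0:ℝ)..T, w (t/T) * (η t * J t)) := by
  set E : ℝ → ℝ := fun t => ∫ τ in a..t, η τ with hE
  have hEd : ∀ t : ℝ, HasDerivAt E (η t) t := fun t =>
    intervalIntegral.integral_hasDerivAt_right (hηc.intervalIntegrable _ _)
      (hηc.stronglyMeasurable.stronglyMeasurableAtFilter) hηc.continuousAt
  have hEc : Continuous E := (Differentiable.continuous (fun t => (hEd t).differentiableAt))
  have hJc : Continuous J := (Differentiable.continuous (fun t => (hJd t).differentiableAt))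
  have hwc : ContinuousOn w (Icc (0:ℝ) 1) := fun s hs => (hw s hs).continuousWithinAt
  have hmaps : MapsTo (fun t : ℝ => t / T) (Icc 0 T) (Icc (0:ℝ) 1) := by
    intro t ht
    exact ⟨div_nonneg ht.1 hT.le, by rw [div_le_one hT]; exact ht.2⟩
  have hwT : ContinuousOn (fun t : ℝ => w (t/T)) (Icc 0 T) :=
    hwc.comp (continuousOn_id.div_const T) hmaps
  have hw'T : ContinuousOn (fun t : ℝ => w' (t/T)) (Icc 0 T) :=
    hw'c.comp (continuousOn_id.div_const T) hmaps
  set g : ℝ → ℝ := fun t => w (t/T) * E t * J t with hg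
  set g' : ℝ → ℝ := fun t =>
    w' (t/T) * (1/T) * (E t * J t) + w (t/T) * (η t * J t) + w (t/T) * E t * J' t with hg'
  have hderiv : ∀ x ∈ Ioo (0:ℝ) T, HasDerivAt g (g' x) x := by
    intro x hx
    have hm1 : 0 < x/T := div_pos hx.1 hT
    have hm2 : x/T < 1 := (div_lt_one hT).mpr hx.2
    have hwx : HasDerivAt (fun t : ℝ => w (t/T)) (w' (x/T) * (1/T)) x := by
      have h0 : HasDerivAt w (w' (x/T)) (x/T) :=
        (hw (x/T) ⟨hm1.le, hm2.le⟩).hasDerivAt (Icc_mem_nhds hm1 hm2)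
      have := h0.comp x ((hasDerivAt_id x).div_const T)
      simpa [one_div, Function.comp_def] using this
    have hfull := (hwx.mul (hEd x)).mul (hJd x)
    have hval : g' x = (w' (x/T) * (1/T) * E x + w (x/T) * η x) * J x + (w (x/T) * E x) * J' x := by
      simp only [hg']; ring
    rw [hval]; exact hfull
  have hcontg : ContinuousOn g (Icc 0 T) :=
    (hwT.mul hEc.continuousOn).mul hJc.continuousOn
  have hcont1 : ContinuousOn (fun t : ℝ => w' (t/T) * (1/T) * (E t * J t)) (Icc 0 T) :=
    (hw'T.mul continuousOn_const).mul (hEc.mul hJc).continuousOn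
  have hcont2 : ContinuousOn (fun t : ℝ => w (t/T) * (η t * J t)) (Icc 0 T) :=
    hwT.mul (hηc.mul hJc).continuousOn
  have hcont3 : ContinuousOn (fun t : ℝ => w (t/T) * E t * J' t) (Icc 0 T) :=
    (hwT.mul hEc.continuousOn).mul hJ'c.continuousOn
  have hint1 : IntervalIntegrable (fun t : ℝ => w' (t/T) * (1/T) * (E t * J t)) volume 0 T := by
    apply ContinuousOn.intervalIntegrable; rwa [uIcc_of_le hT.le]
  have hint2 : IntervalIntegrable (fun t : ℝ => w (t/T) * (η t * J t)) volume 0 T := by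
    apply ContinuousOn.intervalIntegrable; rwa [uIcc_of_le hT.le]
  have hint3 : IntervalIntegrable (fun t : ℝ => w (t/T) * E t * J' t) volume 0 T := by
    apply ContinuousOn.intervalIntegrable; rwa [uIcc_of_le hT.le]
  have hintg' : IntervalIntegrable g' volume 0 T := (hint1.add hint2).add hint3
  have hFTC : ∫ t in (0:ℝ)..T, g' t = g T - g 0 :=
    integral_eq_sub_of_hasDeriv_right_of_le hT.le hcontg
      (fun x hx => (hderiv x hx).hasDerivWithinAt) hintg'
  have hgT : g T = 0 := by
    simp only [hg, div_self hT.ne', hw1]; ring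
  have hg0 : g 0 = 0 := by
    simp only [hg, zero_div, hw0]; ring
  have hsplit : ∫ t in (0:ℝ)..T, g' t
      = (∫ t in (0:ℝ)..T, w' (t/T) * (1/T) * (E t * J t))
        + (∫ t in (0:ℝ)..T, w (t/T) * (η t * J t))
        + (∫ t in (0:ℝ)..T, w (t/T) * E t * J' t) := by
    rw [hg']
    rw [integral_add (hint1.add hint2) hint3, integral_add hint1 hint2]
  rw [hgT, hg0, sub_zero] at hFTC
  rw [hsplit] at hFTC
  have h3 : (∫ t in (0:ℝ)..T, w (t/T) * E t * J' t)
      = -((∫ t in (0:ℝ)..T, w' (t/T) * (1/T) * (E t * J t))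
          + (∫ t in (0:ℝ)..T, w (t/T) * (η t * J t))) := by linarith
  rw [hE] at h3
  rw [h3]
  ring

end helpers

/-- Combination of Equations (14) and (15): for `η` continuous and bounded with
ergodic average `⟨η⟩ = Lη`, `J` bounded and continuously differentiable (with
derivative `J'`) such that `⟨J⟩ = LJ` and `⟨η·J⟩ = LηJ` exist, `w` continuously
differentiable on `[0,1]` with `w 0 = w 1 = 0` and mean `w̄ = ∫₀¹ w`, and
`tau : (0,∞) → ℝ` with `0 ≤ tau T ≤ T` and `lim_{T→∞} tau T / T` existing:
`lim_{T→∞} −(1/T)∫₀ᵀ w(t/T)·(∫_{tau T}^t η)·J'(t) dt = w̄·⟨ηJ⟩ − w̄·⟨η⟩·⟨J⟩`. -/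
theorem windowed_dilated_derivative_average
    (η J J' w w' : ℝ → ℝ) (tau : ℝ → ℝ) (Lη LJ LηJ sc : ℝ)
    (hηc : Continuous η)
    (hηb : ∃ B : ℝ, ∀ t : ℝ, |η t| ≤ B)
    (hη : Tendsto (fun T : ℝ => (1 / T) * ∫ t in (0:ℝ)..T, η t) atTop (nhds Lη))
    (hJb : ∃ B : ℝ, ∀ t : ℝ, |J t| ≤ B)
    (hJd : ∀ t : ℝ, HasDerivAt J (J' t) t)
    (hJ'c : Continuous J')
    (hJ : Tendsto (fun T : ℝ => (1 / T) * ∫ t in (0:ℝ)..T, J t) atTop (nhds LJ))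
    (hηJ : Tendsto (fun T : ℝ => (1 / T) * ∫ t in (0:ℝ)..T, η t * J t) atTop (nhds LηJ))
    (hw : ∀ s ∈ Icc (0:ℝ) 1, HasDerivWithinAt w (w' s) (Icc (0:ℝ) 1) s)
    (hw'c : ContinuousOn w' (Icc (0:ℝ) 1))
    (hw0 : w 0 = 0) (hw1 : w 1 = 0)
    (htau0 : ∀ T : ℝ, 0 < T → 0 ≤ tau T ∧ tau T ≤ T)
    (htau : Tendsto (fun T : ℝ => tau T / T) atTop (nhds sc)) :
    Tendsto (fun T : ℝ =>
        -((1 / T) * ∫ t in (0:ℝ)..T, w (t / T) * (∫ τ in tau T..t, η τ) * J' t))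
      atTop
      (nhds ((∫ s in (0:ℝ)..1, w s) * LηJ - (∫ s in (0:ℝ)..1, w s) * Lη * LJ)) := by
  obtain ⟨Bη, hηB⟩ := hηb
  obtain ⟨BJ, hJB⟩ := hJb
  have hBη0 : 0 ≤ Bη := (abs_nonneg _).trans (hηB 0)
  have hBJ0 : 0 ≤ BJ := (abs_nonneg _).trans (hJB 0)
  have hJc : Continuous J := (Differentiable.continuous (fun t => (hJd t).differentiableAt))
  have hwc : ContinuousOn w (Icc (0:ℝ) 1) := fun s hs => (hw s hs).continuousWithinAt
  have hηJb : ∀ t : ℝ, |η t * J t| ≤ Bη * BJ := by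
    intro t; rw [abs_mul]
    exact mul_le_mul (hηB t) (hJB t) (abs_nonneg _) hBη0
  -- F1 limit
  have F1lim : Tendsto (fun T : ℝ => (1/T) * ∫ t in (0:ℝ)..T, w (t/T) * (η t * J t))
      atTop (nhds ((∫ s in (0:ℝ)..1, w s) * LηJ)) :=
    lemW (hηc.mul hJc) hηJb hηJ hwc
  -- v2 and its limit
  set v2 : ℝ → ℝ := fun s => w' s * (s - sc) with hv2
  have hv2c : ContinuousOn v2 (Icc (0:ℝ) 1) :=
    hw'c.mul ((continuous_id.sub continuous_const).continuousOn)
  have hGlim : Tendsto (fun T : ℝ => Lη * ((1/T) * ∫ t in (0:ℝ)..T, v2 (t/T) * J t))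
      atTop (nhds (Lη * ((∫ s in (0:ℝ)..1, v2 s) * LJ))) :=
    (lemW hJc hJB hJ hv2c).const_mul Lη
  -- F2 definition
  set F2 : ℝ → ℝ := fun T =>
    (1/T) * ∫ t in (0:ℝ)..T, w' (t/T) * (1/T) * ((∫ τ in tau T..t, η τ) * J t) with hF2
  obtain ⟨Cw, hCw⟩ := isCompact_Icc.exists_bound_of_continuousOn hw'c
  have hCw0 : 0 ≤ Cw := (norm_nonneg _).trans (hCw 0 (by norm_num))
  -- F2 - Lη * G → 0
  have hdiff0 : Tendsto (fun T : ℝ =>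
      F2 T - Lη * ((1/T) * ∫ t in (0:ℝ)..T, v2 (t/T) * J t)) atTop (nhds 0) := by
    rw [NormedAddCommGroup.tendsto_nhds_zero]
    intro ε hε
    have hε' : 0 < ε / (8 * (Cw+1) * (BJ+1)) := by positivity
    set ε' : ℝ := ε / (8 * (Cw+1) * (BJ+1)) with hε'def
    filter_upwards [lemU hηB hη hε',
      (Metric.tendsto_nhds.mp (lemU2 hηB hη htau0 htau)) ε' hε',
      eventually_gt_atTop (0:ℝ)] with T hU hU2 hT0
    set Aη : ℝ → ℝ := fun u => ∫ t in (0:ℝ)..u, η t with hAη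
    set E : ℝ → ℝ := fun t => ∫ τ in tau T..t, η τ with hEdef
    have hEc : Continuous E := primitive_continuous hηc (tau T)
    have hAc : Continuous Aη := primitive_continuous hηc 0
    -- rewrite F2 T via substitution
    have hF2T : F2 T = ∫ s in (0:ℝ)..1, w' s * ((E (T*s) / T) * J (T*s)) := by
      simp only [hF2]
      have hcongr : ∫ t in (0:ℝ)..T, w' (t/T) * (1/T) * ((∫ τ in tau T..t, η τ) * J t)
          = ∫ t in (0:ℝ)..T, w' (t/T) * ((E t / T) * J t) := by
        apply intervalIntegral.integral_congr
        intro x _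
        simp only [hEdef]
        ring
      rw [hcongr]
      exact subst_lemma w' (fun t => (E t / T) * J t) T hT0
    have hGT : Lη * ((1/T) * ∫ t in (0:ℝ)..T, v2 (t/T) * J t)
        = ∫ s in (0:ℝ)..1, Lη * (v2 s * J (T*s)) := by
      rw [subst_lemma v2 J T hT0, ← intervalIntegral.integral_const_mul]
    rw [hF2T, hGT]
    have hi1 : IntervalIntegrable (fun s : ℝ => w' s * ((E (T*s) / T) * J (T*s))) volume 0 1 := by
      apply ContinuousOn.intervalIntegrable
      rw [uIcc_of_le (by norm_num : (0:ℝ) ≤ 1)]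
      exact hw'c.mul ((((hEc.comp (continuous_const.mul continuous_id)).div_const T).mul
        (hJc.comp (continuous_const.mul continuous_id))).continuousOn)
    have hi2 : IntervalIntegrable (fun s : ℝ => Lη * (v2 s * J (T*s))) volume 0 1 := by
      apply ContinuousOn.intervalIntegrable
      rw [uIcc_of_le (by norm_num : (0:ℝ) ≤ 1)]
      exact continuousOn_const.mul (hv2c.mul
        ((hJc.comp (continuous_const.mul continuous_id)).continuousOn))
    rw [← intervalIntegral.integral_sub hi1 hi2]
    have hbd : ∀ x ∈ Set.uIoc (0:ℝ) 1,
        ‖w' x * ((E (T*x) / T) * J (T*x)) - Lη * (v2 x * J (T*x))‖ ≤ Cw * (BJ * (2*ε')) := by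
      intro x hx
      have hx' : x ∈ Icc (0:ℝ) 1 := by
        rw [Set.uIoc_of_le (by norm_num : (0:ℝ) ≤ 1)] at hx
        exact ⟨hx.1.le, hx.2⟩
      have hEsplit : E (T*x) = Aη (T*x) - Aη (tau T) := by
        rw [hEdef, hAη]
        exact (intervalIntegral.integral_interval_sub_left
          (hηc.intervalIntegrable _ _) (hηc.intervalIntegrable _ _)).symm
      have hkey : |E (T*x) / T - (x - sc) * Lη| ≤ 2*ε' := by
        have h1 := hU x hx'
        have h2 : |Aη (tau T) / T - sc * Lη| < ε' := by
          rw [← Real.dist_eq]; exact hU2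
        have : E (T*x) / T - (x - sc) * Lη
            = (Aη (T*x) / T - x * Lη) - (Aη (tau T) / T - sc * Lη) := by
          rw [hEsplit]; ring
        rw [this]
        calc |(Aη (T*x) / T - x * Lη) - (Aη (tau T) / T - sc * Lη)|
            ≤ |Aη (T*x) / T - x * Lη| + |Aη (tau T) / T - sc * Lη| := abs_sub _ _
          _ ≤ ε' + ε' := add_le_add h1 h2.le
          _ = 2*ε' := by ring
      have heq : w' x * ((E (T*x) / T) * J (T*x)) - Lη * (v2 x * J (T*x))
          = w' x * J (T*x) * (E (T*x) / T - (x - sc) * Lη) := by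
        simp only [hv2]; ring
      rw [heq, Real.norm_eq_abs, abs_mul, abs_mul]
      have hCwx : |w' x| ≤ Cw := by
        have := hCw x hx'; rwa [Real.norm_eq_abs] at this
      calc |w' x| * |J (T*x)| * |E (T*x) / T - (x - sc) * Lη|
          ≤ Cw * BJ * (2*ε') := by
            apply mul_le_mul _ hkey (abs_nonneg _) (by positivity)
            exact mul_le_mul hCwx (hJB _) (abs_nonneg _) hCw0
        _ = Cw * (BJ * (2*ε')) := by ring
    have hnorm := intervalIntegral.norm_integral_le_of_norm_le_const hbd
    calc ‖∫ s in (0:ℝ)..1, (w' s * ((E (T*s) / T) * J (T*s)) - Lη * (v2 s * J (T*s)))‖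
        ≤ Cw * (BJ * (2*ε')) * |1 - 0| := hnorm
      _ = 2 * Cw * BJ * ε' := by
          rw [abs_of_nonneg (by norm_num : (0:ℝ) ≤ 1 - 0)]; ring
      _ < 8 * (Cw+1) * (BJ+1) * ε' := by
          apply mul_lt_mul_of_pos_right _ hε'
          nlinarith
      _ = ε := by
          rw [hε'def, mul_comm, div_mul_cancel₀ _
            (by positivity : (0:ℝ) < 8 * (Cw+1) * (BJ+1)).ne']
  -- F2 limit
  have hF2lim : Tendsto F2 atTop (nhds (Lη * ((∫ s in (0:ℝ)..1, v2 s) * LJ))) := by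
    have := hdiff0.add hGlim
    rw [zero_add] at this
    apply this.congr
    intro T; ring
  -- combine
  have hsum := hF2lim.add F1lim
  have hval : Lη * ((∫ s in (0:ℝ)..1, v2 s) * LJ) + (∫ s in (0:ℝ)..1, w s) * LηJ
      = (∫ s in (0:ℝ)..1, w s) * LηJ - (∫ s in (0:ℝ)..1, w s) * Lη * LJ := by
    have hV2 : ∫ s in (0:ℝ)..1, v2 s = -∫ s in (0:ℝ)..1, w s :=
      lemV2 hw hw'c hw0 hw1
    rw [hV2]; ring
  rw [hval] at hsum
  apply hsum.congr'
  filter_upwards [eventually_gt_atTop (0:ℝ)] with T hT0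
  have := lemIBP (a := tau T) T hT0 hηc hJd hJ'c hw hw'c hw0 hw1
  rw [← this]
end

section
/- Let η : ℝ → ℝ be bounded and locally integrable with ergodic average ⟨η⟩ = lim_{T→∞} (1/T)∫₀ᵀ η(τ) dτ existing, let J : ℝ → ℝ be bounded and locally integrable, let w : [0,1] → ℝ be continuously differentiable, and let τ̌ : (0,∞) → ℝ satisfy 0 ≤ τ̌(T) ≤ T for all T. Then lim_{T→∞} [ (1/T)∫₀ᵀ w'(t/T)·(1/T)(∫_{τ̌(T)}^{t} η(τ) dτ)·J(t) dt − ⟨η⟩·(1/T)∫₀ᵀ w'(t/T)·((t − τ̌(T))/T)·J(t) dt ] = 0. -/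
open MeasureTheory Filter Set

/-- Consequence of Lemma 3: for `η` bounded, locally integrable with ergodic average
`⟨η⟩ = Lη`, `J` bounded and locally integrable, `w` continuously differentiable on
`[0,1]` (with derivative `w'`), and `tau : (0,∞) → ℝ` with `0 ≤ tau T ≤ T`, the scaled
accumulated dilation `(1/T)∫_{tau T}^t η` may be replaced by `⟨η⟩(t − tau T)/T` inside
the windowed integral without changing the limit:
`lim_{T→∞} [ (1/T)∫₀ᵀ w'(t/T)·(1/T)(∫_{tau T}^t η)·J(t) dt
  − ⟨η⟩·(1/T)∫₀ᵀ w'(t/T)·((t − tau T)/T)·J(t) dt ] = 0`. -/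
theorem windowed_integral_replace_dilation_by_linear
    (η J w w' : ℝ → ℝ) (tau : ℝ → ℝ) (Lη : ℝ)
    (hηb : ∃ B : ℝ, ∀ t : ℝ, |η t| ≤ B)
    (hηloc : LocallyIntegrable η)
    (hη : Tendsto (fun T : ℝ => (1 / T) * ∫ τ in (0:ℝ)..T, η τ) atTop (nhds Lη))
    (hJb : ∃ B : ℝ, ∀ t : ℝ, |J t| ≤ B)
    (hJloc : LocallyIntegrable J)
    (hw : ∀ s ∈ Icc (0:ℝ) 1, HasDerivWithinAt w (w' s) (Icc (0:ℝ) 1) s)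
    (hw'c : ContinuousOn w' (Icc (0:ℝ) 1))
    (htau0 : ∀ T : ℝ, 0 < T → 0 ≤ tau T ∧ tau T ≤ T) :
    Tendsto (fun T : ℝ =>
        (1 / T) * (∫ t in (0:ℝ)..T,
            w' (t / T) * ((1 / T) * ∫ τ in tau T..t, η τ) * J t)
          - Lη * ((1 / T) * ∫ t in (0:ℝ)..T, w' (t / T) * ((t - tau T) / T) * J t))
      atTop (nhds 0) := by
  obtain ⟨B, hB⟩ := hJb
  have hB0 : (0:ℝ) ≤ B := (abs_nonneg _).trans (hB 0)
  obtain ⟨C, hC⟩ := isCompact_Icc.exists_bound_of_continuousOn hw'c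
  have hC0 : (0:ℝ) ≤ C := (norm_nonneg (w' 0)).trans (hC 0 ⟨le_refl 0, zero_le_one⟩)
  have hηint : ∀ a b : ℝ, IntervalIntegrable η volume a b := fun a b =>
    intervalIntegrable_iff.mpr
      ((hηloc.integrableOn_isCompact isCompact_uIcc).mono_set Set.Ioc_subset_Icc_self)
  set F : ℝ → ℝ := fun t => ∫ τ in (0:ℝ)..t, η τ with hFdef
  have hFcont : Continuous F := intervalIntegral.continuous_primitive hηint 0
  set G : ℝ → ℝ := fun t => F t - Lη * t with hGdef
  have hGcont : Continuous G := hFcont.sub (continuous_const.mul continuous_id)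
  rw [NormedAddCommGroup.tendsto_nhds_zero]
  intro ε hε
  set ε' : ℝ := ε / (4 * (C + 1) * (B + 1)) with hε'
  have hε'pos : 0 < ε' := by positivity
  have hG0 : Tendsto (fun T : ℝ => (1 / T) * F T - Lη) atTop (nhds 0) := by
    simpa using hη.sub_const Lη
  obtain ⟨S, hS⟩ : ∃ S : ℝ, ∀ s, S ≤ s → |G s| ≤ ε' * s := by
    obtain ⟨S, hS⟩ := (Metric.tendsto_atTop.mp hG0) ε' hε'pos
    refine ⟨max S 1, fun s hs => ?_⟩
    have hs1 : (1:ℝ) ≤ s := le_trans (le_max_right _ _) hs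
    have hspos : (0:ℝ) < s := lt_of_lt_of_le one_pos hs1
    have h := hS s (le_trans (le_max_left _ _) hs)
    rw [Real.dist_eq, sub_zero] at h
    have hGs : G s = s * ((1 / s) * F s - Lη) := by
      simp only [hGdef]
      field_simp
    rw [hGs, abs_mul, abs_of_pos hspos]
    calc s * |1 / s * F s - Lη| ≤ s * ε' := mul_le_mul_of_nonneg_left h.le hspos.le
      _ = ε' * s := mul_comm _ _
  obtain ⟨M, hM⟩ :=
    (isCompact_Icc (a := (0:ℝ)) (b := max S 0)).exists_bound_of_continuousOn
      hGcont.continuousOn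
  have hM0 : (0:ℝ) ≤ M :=
    (norm_nonneg (G 0)).trans (hM 0 ⟨le_refl 0, le_max_right _ _⟩)
  filter_upwards [eventually_ge_atTop (max (max S 1) (M / ε'))] with T hT
  have hT1 : (1:ℝ) ≤ T := le_trans (le_trans (le_max_right _ _) (le_max_left _ _)) hT
  have hTpos : (0:ℝ) < T := lt_of_lt_of_le one_pos hT1
  have hTS : S ≤ T := le_trans (le_trans (le_max_left _ _) (le_max_left _ _)) hT
  have hTM : M ≤ ε' * T := by
    have := le_trans (le_max_right _ _) hT
    rw [div_le_iff₀ hε'pos] at this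
    linarith [this]
  obtain ⟨hτ0, hτT⟩ := htau0 T hTpos
  -- uniform bound on G over [0, T]
  have hsup : ∀ s ∈ Icc (0:ℝ) T, |G s| ≤ ε' * T := by
    intro s hs
    by_cases h : S ≤ s
    · exact (hS s h).trans (mul_le_mul_of_nonneg_left hs.2 hε'pos.le)
    · push_neg at h
      have : s ∈ Icc (0:ℝ) (max S 0) := ⟨hs.1, le_max_of_le_left h.le⟩
      exact (hM s this).trans hTM
  have huIcc : Set.uIcc (0:ℝ) T = Icc (0:ℝ) T := Set.uIcc_of_le hTpos.le
  have hwT : ContinuousOn (fun t : ℝ => w' (t / T)) (Icc (0:ℝ) T) := by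
    refine hw'c.comp (continuous_id.div_const T).continuousOn ?_
    intro t ht
    exact ⟨div_nonneg ht.1 hTpos.le, (div_le_one hTpos).mpr ht.2⟩
  have hrw : ∀ t : ℝ, (∫ τ in tau T..t, η τ) = F t - F (tau T) := fun t =>
    (intervalIntegral.integral_interval_sub_left (hηint 0 t) (hηint 0 (tau T))).symm
  have hJ_ii : IntervalIntegrable J volume 0 T :=
    intervalIntegrable_iff.mpr
      ((hJloc.integrableOn_isCompact isCompact_uIcc).mono_set Set.Ioc_subset_Icc_self)
  have hfint : IntervalIntegrable
      (fun t => w' (t / T) * ((1 / T) * (F t - F (tau T))) * J t) volume 0 T := by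
    apply hJ_ii.continuousOn_mul
    rw [huIcc]
    exact hwT.mul ((continuous_const.mul (hFcont.sub continuous_const)).continuousOn)
  have hgint : IntervalIntegrable
      (fun t => w' (t / T) * ((t - tau T) / T) * J t) volume 0 T := by
    apply hJ_ii.continuousOn_mul
    rw [huIcc]
    exact hwT.mul (((continuous_id.sub continuous_const).div_const T).continuousOn)
  simp only [hrw]
  have hsub :
      (1 / T) * (∫ t in (0:ℝ)..T, w' (t / T) * ((1 / T) * (F t - F (tau T))) * J t)
          - Lη * ((1 / T) * ∫ t in (0:ℝ)..T, w' (t / T) * ((t - tau T) / T) * J t)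
        = (1 / T) * ∫ t in (0:ℝ)..T,
            w' (t / T) * ((G t - G (tau T)) / T) * J t := by
    have heq : ∀ t : ℝ,
        w' (t / T) * ((G t - G (tau T)) / T) * J t
          = w' (t / T) * ((1 / T) * (F t - F (tau T))) * J t
            - Lη * (w' (t / T) * ((t - tau T) / T) * J t) := by
      intro t
      simp only [hGdef]
      ring
    rw [intervalIntegral.integral_congr (g := fun t =>
        w' (t / T) * ((1 / T) * (F t - F (tau T))) * J t
          - Lη * (w' (t / T) * ((t - tau T) / T) * J t)) (fun t _ => heq t)]
    rw [intervalIntegral.integral_sub hfint (hgint.const_mul Lη),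
      intervalIntegral.integral_const_mul]
    ring
  rw [hsub]
  have hbound : ‖∫ t in (0:ℝ)..T, w' (t / T) * ((G t - G (tau T)) / T) * J t‖
      ≤ (C * (2 * ε') * B) * |T - 0| := by
    apply intervalIntegral.norm_integral_le_of_norm_le_const
    intro t ht
    rw [Set.uIoc_of_le hTpos.le] at ht
    have htIcc : t ∈ Icc (0:ℝ) T := ⟨ht.1.le, ht.2⟩
    have h1 : |w' (t / T)| ≤ C := by
      have := hC (t / T) ⟨div_nonneg htIcc.1 hTpos.le, (div_le_one hTpos).mpr htIcc.2⟩
      simpa using this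
    have h2 : |(G t - G (tau T)) / T| ≤ 2 * ε' := by
      rw [abs_div, abs_of_pos hTpos, div_le_iff₀ hTpos]
      have ha := hsup t htIcc
      have hb := hsup (tau T) ⟨hτ0, hτT⟩
      calc |G t - G (tau T)| ≤ |G t| + |G (tau T)| := abs_sub _ _
        _ ≤ ε' * T + ε' * T := add_le_add ha hb
        _ = 2 * ε' * T := by ring
    have h3 : |J t| ≤ B := hB t
    calc ‖w' (t / T) * ((G t - G (tau T)) / T) * J t‖
        = |w' (t / T)| * |(G t - G (tau T)) / T| * |J t| := by
          rw [Real.norm_eq_abs, abs_mul, abs_mul]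
      _ ≤ C * (2 * ε') * B := by
          apply mul_le_mul _ h3 (abs_nonneg _) (by positivity)
          exact mul_le_mul h1 h2 (abs_nonneg _) hC0
  have habs : ‖(1 / T) * ∫ t in (0:ℝ)..T, w' (t / T) * ((G t - G (tau T)) / T) * J t‖
      ≤ C * (2 * ε') * B := by
    rw [norm_mul, Real.norm_eq_abs (1 / T), abs_of_pos (by positivity : (0:ℝ) < 1 / T)]
    calc (1 / T) * ‖∫ t in (0:ℝ)..T, w' (t / T) * ((G t - G (tau T)) / T) * J t‖
        ≤ (1 / T) * ((C * (2 * ε') * B) * |T - 0|) :=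
          mul_le_mul_of_nonneg_left hbound (by positivity)
      _ = C * (2 * ε') * B := by
          rw [sub_zero, abs_of_pos hTpos]
          field_simp
  refine lt_of_le_of_lt habs ?_
  have h4 : ε' * (4 * (C + 1) * (B + 1)) = ε := by
    rw [hε']
    field_simp
  nlinarith [mul_pos hε'pos (by positivity : (0:ℝ) < 2 * C * B + 4 * C + 4 * B + 4)]
end

section
/- Let f : ℝⁿ → ℝⁿ be continuously differentiable, let u : ℝ → ℝⁿ be differentiable with u'(t) = f(u(t)) for all t, let g : ℝ → ℝⁿ and η : ℝ → ℝ be continuous, and let v : ℝ → ℝⁿ be differentiable and satisfy the time-dilated linearized equation v'(t) = Df(u(t))·v(t) + g(t) + η(t)·f(u(t)) for all t, where Df(u(t)) is the Jacobian (Fréchet derivative) of f at u(t). Fix τ̌ ∈ ℝ and define v̌(t) = v(t) − f(u(t))·∫_{τ̌}^{t} η(τ) dτ. Then v̌ is differentiable and satisfies the non-dilated linearized equation v̌'(t) = Df(u(t))·v̌(t) + g(t) for all t. -/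
open MeasureTheory Filter Set

/-- Removing the time dilation term: if `u` solves `u' = f(u)`, and `v` solves the
time-dilated linearized equation `v' = Df(u)·v + g + η·f(u)`, then
`v̌(t) = v(t) − (∫_tau^t η) • f(u(t))` solves the non-dilated linearized equation
`v̌' = Df(u)·v̌ + g`. -/
theorem shifted_tangent_solves_nondilated_equation
    {n : ℕ} (f : EuclideanSpace ℝ (Fin n) → EuclideanSpace ℝ (Fin n))
    (u v g : ℝ → EuclideanSpace ℝ (Fin n)) (η : ℝ → ℝ) (tau : ℝ)
    (hf : ContDiff ℝ 1 f)
    (hu : ∀ t : ℝ, HasDerivAt u (f (u t)) t)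
    (hg : Continuous g) (hη : Continuous η)
    (hv : ∀ t : ℝ, HasDerivAt v (fderiv ℝ f (u t) (v t) + g t + η t • f (u t)) t) :
    ∀ t : ℝ,
      HasDerivAt (fun s : ℝ => v s - (∫ τ in tau..s, η τ) • f (u s))
        (fderiv ℝ f (u t) (v t - (∫ τ in tau..t, η τ) • f (u t)) + g t) t := by
  intro t
  have hI : HasDerivAt (fun s => ∫ τ in tau..s, η τ) (η t) t :=
    intervalIntegral.integral_hasDerivAt_right (hη.intervalIntegrable _ _)
      (hη.stronglyMeasurableAtFilter _ _) hη.continuousAt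
  have hfu : HasDerivAt (fun s => f (u s)) (fderiv ℝ f (u t) (f (u t))) t :=
    ((hf.differentiable one_ne_zero (u t)).hasFDerivAt).comp_hasDerivAt t (hu t)
  have hprod := hI.smul hfu
  have h := (hv t).sub hprod
  convert h using 1
  iterate 4 rfl
  rw [map_sub, (fderiv ℝ f (u t)).map_smul]
  abel
end
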